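/- arXiv:1406.7546 — 5 statements merged into one kernel-verified Lean document; each statement's English description precedes it below -/
import Mathlib

section
/- Let E be a Banach space, (xₙ) a sequence in E, and p ∈ [1,∞). If F ⊆ E* is a norming subset (i.e., ‖x‖ = sup_{x*∈F} |⟨x, x*⟩| for all x ∈ E), then the weak-ℓᵖ norm of (xₙ) computed over the unit ball of E* equals the supremum over F: sup_{x*∈B_{E*}} (∑ₙ |⟨xₙ, x*⟩|^p)^{1/p} = sup_{x*∈F} (∑ₙ |⟨xₙ, x*⟩|^p)^{1/p}. -/
open scoped BigOperators ENNReal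

private theorem key_holder (s : Finset ℕ) (p : ℝ) (hp : 1 ≤ p) (u v : ℕ → ℝ) :
    ∑ n ∈ s, |u n| ^ (p-1) * |v n| ≤
      (∑ n ∈ s, |v n| ^ p) ^ (1/p) * (∑ n ∈ s, |u n| ^ p) ^ (1 - 1/p) := by
  rcases eq_or_lt_of_le hp with rfl | hp1
  · norm_num [Real.rpow_zero, Real.rpow_one]
  · have hpq := Real.HolderConjugate.conjExponent hp1
    set q := Real.conjExponent p with hq
    have key := Real.inner_le_Lp_mul_Lq_of_nonneg (f := fun n => |v n|)
      (g := fun n => |u n| ^ (p-1)) (s := s) hpq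
      (fun n (_ : n ∈ s) => abs_nonneg (v n))
      (fun n (_ : n ∈ s) => Real.rpow_nonneg (abs_nonneg (u n)) (p-1))
    have h1 : ∀ n, (|u n| ^ (p-1)) ^ q = |u n| ^ p := fun n => by
      rw [← Real.rpow_mul (abs_nonneg _), hpq.sub_one_mul_conj]
    have h2 : (1 : ℝ) / q = 1 - 1/p := by
      rw [one_div, one_div, ← hpq.one_sub_inv]
    calc ∑ n ∈ s, |u n| ^ (p-1) * |v n| = ∑ n ∈ s, |v n| * |u n| ^ (p-1) :=
          Finset.sum_congr rfl fun n _ => mul_comm _ _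
      _ ≤ (∑ n ∈ s, |v n| ^ p) ^ (1/p) * (∑ n ∈ s, (|u n| ^ (p-1)) ^ q) ^ (1/q) := key
      _ = (∑ n ∈ s, |v n| ^ p) ^ (1/p) * (∑ n ∈ s, |u n| ^ p) ^ (1 - 1/p) := by
          rw [h2, Finset.sum_congr rfl fun n _ => h1 n]

private theorem sign_trick (p t : ℝ) (hp : 1 ≤ p) :
    Real.sign t * |t| ^ (p-1) * t = |t| ^ p := by
  rcases eq_or_ne t 0 with rfl | ht
  · simp [Real.zero_rpow (by linarith : p ≠ 0)]
  · have h1 : Real.sign t * t = |t| := by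
      rcases lt_or_gt_of_ne ht with h | h
      · rw [Real.sign_of_neg h, abs_of_neg h]; ring
      · rw [Real.sign_of_pos h, abs_of_pos h, one_mul]
    have h2 : |t| ^ (p-1) * |t| = |t| ^ p := by
      nth_rewrite 2 [← Real.rpow_one |t|]
      rw [← Real.rpow_add (abs_pos.2 ht)]; ring_nf
    calc Real.sign t * |t| ^ (p-1) * t = |t| ^ (p-1) * (Real.sign t * t) := by ring
      _ = |t| ^ p := by rw [h1, h2]

private theorem coe_sum_eq (s : Finset ℕ) (p : ℝ) (hp : 1 ≤ p) (u : ℕ → ℝ) :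
    ∑ n ∈ s, ((‖u n‖₊ : ℝ≥0∞)) ^ p = ENNReal.ofReal (∑ n ∈ s, |u n| ^ p) := by
  rw [ENNReal.ofReal_sum_of_nonneg (fun n _ => Real.rpow_nonneg (abs_nonneg _) _)]
  refine Finset.sum_congr rfl fun n _ => ?_
  rw [← ENNReal.ofReal_rpow_of_nonneg (abs_nonneg _) (by linarith), ← Real.norm_eq_abs,
    ofReal_norm, enorm_eq_nnnorm]

private theorem abs_sign_le (t : ℝ) : |Real.sign t| ≤ 1 := by
  rcases lt_trichotomy t 0 with h | rfl | h
  · rw [Real.sign_of_neg h]; norm_num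
  · simp
  · rw [Real.sign_of_pos h]; norm_num

/-- If `F ⊆ E*` is norming, the weak-`ℓᵖ` norm of a sequence can be computed using `F` instead of
the whole unit ball of `E*` (values taken in `ℝ≥0∞`, as the suprema may be infinite). -/
theorem weak_lp_norm_via_norming
    {E : Type*} [NormedAddCommGroup E] [NormedSpace ℝ E]
    (p : ℝ) (hp : 1 ≤ p) (x : ℕ → E) (F : Set (StrongDual ℝ E))
    (hF : ∀ y : E, (‖y‖₊ : ℝ≥0∞) = ⨆ f ∈ F, (‖f y‖₊ : ℝ≥0∞)) :
    (⨆ (g : StrongDual ℝ E) (_ : ‖g‖ ≤ 1),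
        (∑' n, (‖g (x n)‖₊ : ℝ≥0∞) ^ p) ^ (1 / p)) =
      ⨆ f ∈ F, (∑' n, (‖f (x n)‖₊ : ℝ≥0∞) ^ p) ^ (1 / p) := by
  have hp0 : p ≠ 0 := by linarith
  have hp0' : (0:ℝ) ≤ p := by linarith
  set S := ⨆ f ∈ F, (∑' n, (‖f (x n)‖₊ : ℝ≥0∞) ^ p) ^ (1 / p) with hS
  -- every element of F is in the unit ball
  have hFball : ∀ f ∈ F, ‖f‖ ≤ 1 := by
    intro f hf
    refine (f : E →L[ℝ] ℝ).opNorm_le_bound zero_le_one fun y => ?_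
    rw [one_mul]
    have h1 : (‖f y‖₊ : ℝ≥0∞) ≤ (‖y‖₊ : ℝ≥0∞) := by
      rw [hF y]; exact le_iSup₂ (f := fun f (_ : f ∈ F) => (‖f y‖₊ : ℝ≥0∞)) f hf
    exact_mod_cast h1
  refine le_antisymm ?_ ?_
  · -- the hard direction
    refine iSup₂_le fun g hg => ?_
    rcases eq_or_ne S ⊤ with hStop | hStop
    · rw [hStop]; exact le_top
    set C := S.toReal with hC
    have hC0 : 0 ≤ C := ENNReal.toReal_nonneg
    -- claim A
    have claimA : ∀ f ∈ F, ∀ s : Finset ℕ, ∑ n ∈ s, |f (x n)| ^ p ≤ C ^ p := by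
      intro f hf s
      have h1 : (∑' n, (‖f (x n)‖₊ : ℝ≥0∞) ^ p) ^ (1 / p) ≤ S :=
        le_iSup₂ (f := fun f (_ : f ∈ F) => (∑' n, (‖f (x n)‖₊ : ℝ≥0∞) ^ p) ^ (1 / p)) f hf
      have h2 : (∑' n, (‖f (x n)‖₊ : ℝ≥0∞) ^ p) ≤ S ^ p := by
        have := ENNReal.rpow_le_rpow h1 hp0'
        rwa [← ENNReal.rpow_mul, one_div, inv_mul_cancel₀ hp0, ENNReal.rpow_one] at this
      have h3 : ∑ n ∈ s, (‖f (x n)‖₊ : ℝ≥0∞) ^ p ≤ S ^ p :=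
        le_trans (ENNReal.sum_le_tsum s) h2
      rw [coe_sum_eq s p hp] at h3
      have h4 : S ^ p ≠ ⊤ := ENNReal.rpow_ne_top_of_nonneg hp0' hStop
      have h5 := (ENNReal.ofReal_le_iff_le_toReal h4).1 h3
      rwa [← ENNReal.toReal_rpow] at h5
    -- reduce to finite sums
    have main : ∀ s : Finset ℕ, ∑ n ∈ s, (‖g (x n)‖₊ : ℝ≥0∞) ^ p ≤ S ^ p := by
      intro s
      set T := ∑ n ∈ s, |g (x n)| ^ p with hT
      have hT0 : 0 ≤ T := Finset.sum_nonneg fun n _ => Real.rpow_nonneg (abs_nonneg _) _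
      set a : ℕ → ℝ := fun n => Real.sign (g (x n)) * |g (x n)| ^ (p-1) with ha
      set y : E := ∑ n ∈ s, a n • x n with hy
      have hgy : g y = T := by
        rw [hy, map_sum]
        exact Finset.sum_congr rfl fun n _ => by
          rw [map_smul, smul_eq_mul, ha, ← sign_trick p (g (x n)) hp]
      have habs_a : ∀ n, |a n| ≤ |g (x n)| ^ (p-1) := by
        intro n
        rw [ha]
        calc |Real.sign (g (x n)) * |g (x n)| ^ (p-1)|
            = |Real.sign (g (x n))| * |g (x n)| ^ (p-1) := by
              rw [abs_mul, abs_of_nonneg (Real.rpow_nonneg (abs_nonneg _) _)]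
          _ ≤ 1 * |g (x n)| ^ (p-1) :=
              mul_le_mul_of_nonneg_right (abs_sign_le _)
                (Real.rpow_nonneg (abs_nonneg _) _)
          _ = |g (x n)| ^ (p-1) := one_mul _
      -- bound |f y| for f ∈ F
      have hfy : ∀ f ∈ F, |f y| ≤ C * T ^ (1 - 1/p) := by
        intro f hf
        have h1 : |f y| ≤ ∑ n ∈ s, |g (x n)| ^ (p-1) * |f (x n)| := by
          rw [hy, map_sum]
          refine le_trans (Finset.abs_sum_le_sum_abs _ _) (Finset.sum_le_sum fun n _ => ?_)
          rw [map_smul, smul_eq_mul, abs_mul]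
          exact mul_le_mul_of_nonneg_right (habs_a n) (abs_nonneg _)
        have h2 := key_holder s p hp (fun n => g (x n)) (fun n => f (x n))
        have h3 : (∑ n ∈ s, |f (x n)| ^ p) ^ (1/p) ≤ C := by
          have := Real.rpow_le_rpow
            (Finset.sum_nonneg fun n _ => Real.rpow_nonneg (abs_nonneg _) _)
            (claimA f hf s) (by positivity : (0:ℝ) ≤ 1/p)
          rwa [← Real.rpow_mul hC0, mul_one_div_cancel hp0, Real.rpow_one] at this
        calc |f y| ≤ ∑ n ∈ s, |g (x n)| ^ (p-1) * |f (x n)| := h1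
          _ ≤ (∑ n ∈ s, |f (x n)| ^ p) ^ (1/p) * T ^ (1 - 1/p) := h2
          _ ≤ C * T ^ (1 - 1/p) :=
              mul_le_mul_of_nonneg_right h3 (Real.rpow_nonneg hT0 _)
      -- bound ‖y‖
      have hB0 : 0 ≤ C * T ^ (1 - 1/p) := mul_nonneg hC0 (Real.rpow_nonneg hT0 _)
      have hynorm : ‖y‖ ≤ C * T ^ (1 - 1/p) := by
        have h1 : (‖y‖₊ : ℝ≥0∞) ≤ ENNReal.ofReal (C * T ^ (1 - 1/p)) := by
          rw [hF y]
          refine iSup₂_le fun f hf => ?_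
          rw [← enorm_eq_nnnorm, ← ofReal_norm]
          exact ENNReal.ofReal_le_ofReal (by rw [Real.norm_eq_abs]; exact hfy f hf)
        rw [← enorm_eq_nnnorm, ← ofReal_norm] at h1
        exact (ENNReal.ofReal_le_ofReal_iff hB0).1 h1
      -- main inequality
      have hTC : T ≤ C * T ^ (1 - 1/p) := by
        calc T = g y := hgy.symm
          _ ≤ |g y| := le_abs_self _
          _ ≤ ‖g‖ * ‖y‖ := by rw [← Real.norm_eq_abs]; exact g.le_opNorm y
          _ ≤ 1 * ‖y‖ := mul_le_mul_of_nonneg_right hg (norm_nonneg _)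
          _ = ‖y‖ := one_mul _
          _ ≤ C * T ^ (1 - 1/p) := hynorm
      have hTCp : T ≤ C ^ p := by
        rcases eq_or_lt_of_le hT0 with hT0' | hTpos
        · rw [← hT0']; positivity
        · have e1 : T * T ^ (1/p - 1) = T ^ (1/p) := by
            nth_rewrite 1 [← Real.rpow_one T]
            rw [← Real.rpow_add hTpos]; ring_nf
          have e2 : C * T ^ (1 - 1/p) * T ^ (1/p - 1) = C := by
            rw [mul_assoc, ← Real.rpow_add hTpos,
              show (1 - 1/p) + (1/p - 1) = 0 by ring, Real.rpow_zero, mul_one]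
          have hT1p : T ^ (1/p) ≤ C := by
            calc T ^ (1/p) = T * T ^ (1/p - 1) := e1.symm
              _ ≤ C * T ^ (1 - 1/p) * T ^ (1/p - 1) :=
                  mul_le_mul_of_nonneg_right hTC (Real.rpow_nonneg hT0 _)
              _ = C := e2
          have := Real.rpow_le_rpow (Real.rpow_nonneg hT0 _) hT1p hp0'
          rwa [← Real.rpow_mul hT0, one_div_mul_cancel hp0, Real.rpow_one] at this
      -- convert back
      rw [coe_sum_eq s p hp, ← hT]
      calc ENNReal.ofReal T ≤ ENNReal.ofReal (C ^ p) := ENNReal.ofReal_le_ofReal hTCp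
        _ = (ENNReal.ofReal C) ^ p := (ENNReal.ofReal_rpow_of_nonneg hC0 hp0').symm
        _ = S ^ p := by rw [hC, ENNReal.ofReal_toReal hStop]
    have htsum : (∑' n, (‖g (x n)‖₊ : ℝ≥0∞) ^ p) ≤ S ^ p := by
      rw [ENNReal.tsum_eq_iSup_sum]
      exact iSup_le main
    have := ENNReal.rpow_le_rpow htsum (by positivity : (0:ℝ) ≤ 1/p)
    rwa [← ENNReal.rpow_mul, mul_one_div_cancel hp0, ENNReal.rpow_one] at this
  · -- easy direction
    refine iSup₂_le fun f hf => ?_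
    exact le_iSup₂_of_le f (hFball f hf) le_rfl
end

section
/- Let E, F be Banach spaces and 1 ≤ p < q < ∞. If u : E → F is p-summing then u is q-summing and π_q(u) ≤ π_p(u). -/
open scoped BigOperators

/-- The set of admissible `p`-summing constants of `u`: nonnegative `c` such that
`∑ ‖u xₙ‖ᵖ ≤ cᵖ · sup_{‖x*‖≤1} ∑ |⟨xₙ, x*⟩|ᵖ` for all finite families. -/
def summingSet (p : ℝ) {E F : Type*} [NormedAddCommGroup E] [NormedSpace ℝ E]
    [NormedAddCommGroup F] [NormedSpace ℝ F] (u : E →L[ℝ] F) : Set ℝ :=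
  {c | 0 ≤ c ∧ ∀ (N : ℕ) (x : Fin N → E),
    ∑ n : Fin N, ‖u (x n)‖ ^ p ≤
      c ^ p * ⨆ g : {g : StrongDual ℝ E // ‖g‖ ≤ 1}, ∑ n : Fin N, |g.1 (x n)| ^ p}

/-- `u` is `p`-summing. -/
def IsPSumming (p : ℝ) {E F : Type*} [NormedAddCommGroup E] [NormedSpace ℝ E]
    [NormedAddCommGroup F] [NormedSpace ℝ F] (u : E →L[ℝ] F) : Prop :=
  (summingSet p u).Nonempty

/-- The `p`-summing norm `π_p(u)` (the least admissible constant). -/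
noncomputable def piNorm (p : ℝ) {E F : Type*} [NormedAddCommGroup E] [NormedSpace ℝ E]
    [NormedAddCommGroup F] [NormedSpace ℝ F] (u : E →L[ℝ] F) : ℝ :=
  sInf (summingSet p u)

private lemma bdd_range (r : ℝ) (hr : 0 ≤ r) {E : Type*} [NormedAddCommGroup E]
    [NormedSpace ℝ E] (N : ℕ) (x : Fin N → E) :
    BddAbove (Set.range fun g : {g : StrongDual ℝ E // ‖g‖ ≤ 1} =>
      ∑ n : Fin N, |g.1 (x n)| ^ r) := by
  refine ⟨∑ n : Fin N, ‖x n‖ ^ r, ?_⟩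
  rintro _ ⟨g, rfl⟩
  refine Finset.sum_le_sum fun n _ => Real.rpow_le_rpow (abs_nonneg _) ?_ hr
  calc |g.1 (x n)| = ‖g.1 (x n)‖ := rfl
    _ ≤ ‖g.1‖ * ‖x n‖ := g.1.le_opNorm _
    _ ≤ 1 * ‖x n‖ := by gcongr; exact g.2
    _ = ‖x n‖ := one_mul _

private instance ne_inst {E : Type*} [NormedAddCommGroup E] [NormedSpace ℝ E] :
    Nonempty {g : StrongDual ℝ E // ‖g‖ ≤ 1} := ⟨⟨0, by simp⟩⟩

private lemma sup_nonneg' (r : ℝ) (hr : 1 ≤ r) {E : Type*} [NormedAddCommGroup E]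
    [NormedSpace ℝ E] (N : ℕ) (x : Fin N → E) :
    0 ≤ ⨆ g : {g : StrongDual ℝ E // ‖g‖ ≤ 1}, ∑ n : Fin N, |g.1 (x n)| ^ r := by
  have h0 : (0:ℝ) = ∑ n : Fin N,
      |((⟨0, by simp⟩ : {g : StrongDual ℝ E // ‖g‖ ≤ 1}).1 : StrongDual ℝ E) (x n)| ^ r := by
    simp [Real.zero_rpow (by linarith : r ≠ 0)]
  rw [h0]
  exact le_ciSup (bdd_range r (by linarith) N x) _

private lemma summingSet_subset {E F : Type*} [NormedAddCommGroup E] [NormedSpace ℝ E]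
    [NormedAddCommGroup F] [NormedSpace ℝ F]
    (p q : ℝ) (hp : 1 ≤ p) (hpq : p < q) (u : E →L[ℝ] F) :
    summingSet p u ⊆ summingSet q u := by
  rintro c ⟨hc0, hc⟩
  have hp0 : (0:ℝ) < p := lt_of_lt_of_le one_pos hp
  have hq0 : (0:ℝ) < q := hp0.trans hpq
  have hq1 : 1 ≤ q := hp.trans hpq.le
  refine ⟨hc0, fun N x => ?_⟩
  set S : ℝ := ∑ n : Fin N, ‖u (x n)‖ ^ q with hS
  set T : ℝ := ⨆ g : {g : StrongDual ℝ E // ‖g‖ ≤ 1}, ∑ n : Fin N, |g.1 (x n)| ^ q with hT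
  have hSnn : 0 ≤ S := Finset.sum_nonneg fun n _ => Real.rpow_nonneg (norm_nonneg _) _
  have hTnn : 0 ≤ T := sup_nonneg' q hq1 N x
  -- the modified family
  set y : Fin N → E := fun n => (‖u (x n)‖ ^ ((q - p) / p)) • x n with hy
  have hnuy : ∀ n, ‖u (y n)‖ ^ p = ‖u (x n)‖ ^ q := by
    intro n
    have h1 : ‖u (y n)‖ = ‖u (x n)‖ ^ (q / p) := by
      have h2 : u (y n) = (‖u (x n)‖ ^ ((q - p) / p)) • u (x n) := by simp [hy]
      rw [h2, norm_smul, Real.norm_eq_abs,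
        abs_of_nonneg (Real.rpow_nonneg (norm_nonneg _) _)]
      calc ‖u (x n)‖ ^ ((q - p) / p) * ‖u (x n)‖
          = ‖u (x n)‖ ^ ((q - p) / p) * ‖u (x n)‖ ^ (1:ℝ) := by rw [Real.rpow_one]
        _ = ‖u (x n)‖ ^ ((q - p) / p + 1) :=
            (Real.rpow_add' (norm_nonneg _) (ne_of_gt (by
              have h : 0 < (q - p) / p := div_pos (by linarith) hp0
              linarith))).symm
        _ = ‖u (x n)‖ ^ (q / p) := by congr 1; field_simp; ring
    rw [h1, ← Real.rpow_mul (norm_nonneg _), div_mul_cancel₀ _ (ne_of_gt hp0)]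
  -- key bound on the sup for the modified family
  have hkey : (⨆ g : {g : StrongDual ℝ E // ‖g‖ ≤ 1}, ∑ n : Fin N, |g.1 (y n)| ^ p)
      ≤ S ^ ((q - p) / q) * T ^ (p / q) := by
    refine ciSup_le fun g => ?_
    have hconj : Real.HolderConjugate (q / (q - p)) (q / p) := by
      rw [Real.holderConjugate_iff]
      constructor
      · rw [lt_div_iff₀ (by linarith)]; linarith
      · have h1 : q - p ≠ 0 := by linarith
        have h2 : q ≠ 0 := ne_of_gt hq0
        rw [inv_div, inv_div, ← add_div]
        rw [show q - p + p = q by ring, div_self h2]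
    have heq : ∀ n, |g.1 (y n)| ^ p = ‖u (x n)‖ ^ (q - p) * |g.1 (x n)| ^ p := by
      intro n
      have : |g.1 (y n)| = ‖u (x n)‖ ^ ((q - p) / p) * |g.1 (x n)| := by
        simp [hy, abs_mul, abs_of_nonneg (Real.rpow_nonneg (norm_nonneg _) _)]
      rw [this, Real.mul_rpow (Real.rpow_nonneg (norm_nonneg _) _) (abs_nonneg _),
        ← Real.rpow_mul (norm_nonneg _)]
      rw [div_mul_cancel₀ _ (ne_of_gt hp0)]
    calc ∑ n : Fin N, |g.1 (y n)| ^ p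
        = ∑ n : Fin N, ‖u (x n)‖ ^ (q - p) * |g.1 (x n)| ^ p := by
          exact Finset.sum_congr rfl fun n _ => heq n
      _ ≤ (∑ n : Fin N, (‖u (x n)‖ ^ (q - p)) ^ (q / (q - p))) ^ (1 / (q / (q - p))) *
          (∑ n : Fin N, (|g.1 (x n)| ^ p) ^ (q / p)) ^ (1 / (q / p)) :=
          Real.inner_le_Lp_mul_Lq_of_nonneg _ hconj
            (fun n _ => Real.rpow_nonneg (norm_nonneg _) _)
            (fun n _ => Real.rpow_nonneg (abs_nonneg _) _)
      _ = (∑ n : Fin N, ‖u (x n)‖ ^ q) ^ ((q - p) / q) *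
          (∑ n : Fin N, |g.1 (x n)| ^ q) ^ (p / q) := by
          have h1 : q - p ≠ 0 := by linarith
          have h2 : q ≠ 0 := ne_of_gt hq0
          have h3 : p ≠ 0 := ne_of_gt hp0
          rw [one_div, one_div, inv_div, inv_div]
          congr 2
          · refine Finset.sum_congr rfl fun n _ => ?_
            rw [← Real.rpow_mul (norm_nonneg _)]
            congr 1
            field_simp
          · refine Finset.sum_congr rfl fun n _ => ?_
            rw [← Real.rpow_mul (abs_nonneg _)]
            congr 1
            field_simp
      _ ≤ S ^ ((q - p) / q) * T ^ (p / q) := by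
          gcongr
          exact le_ciSup (bdd_range q (le_of_lt hq0) N x) g
  -- apply the p-summing hypothesis to y
  have hmain : S ≤ c ^ p * (S ^ ((q - p) / q) * T ^ (p / q)) := by
    calc S = ∑ n : Fin N, ‖u (y n)‖ ^ p := by
          exact (Finset.sum_congr rfl fun n _ => (hnuy n)).symm
      _ ≤ c ^ p * ⨆ g : {g : StrongDual ℝ E // ‖g‖ ≤ 1}, ∑ n : Fin N, |g.1 (y n)| ^ p :=
          hc N y
      _ ≤ c ^ p * (S ^ ((q - p) / q) * T ^ (p / q)) :=
          mul_le_mul_of_nonneg_left hkey (Real.rpow_nonneg hc0 _)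
  -- conclude
  rcases eq_or_lt_of_le hSnn with hS0 | hSpos
  · rw [← hS0]
    positivity
  · -- cancel S ^ ((q-p)/q)
    have hSpq : S = S ^ (p / q) * S ^ ((q - p) / q) := by
      rw [← Real.rpow_add hSpos]
      rw [← add_div]
      rw [show p + (q - p) = q by ring, div_self (ne_of_gt hq0), Real.rpow_one]
    have hstep : S ^ (p / q) ≤ c ^ p * T ^ (p / q) := by
      have h1 : S ^ (p / q) * S ^ ((q - p) / q) ≤ (c ^ p * T ^ (p / q)) * S ^ ((q - p) / q) := by
        rw [← hSpq]
        calc S ≤ c ^ p * (S ^ ((q - p) / q) * T ^ (p / q)) := hmain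
          _ = (c ^ p * T ^ (p / q)) * S ^ ((q - p) / q) := by ring
      exact le_of_mul_le_mul_right h1 (Real.rpow_pos_of_pos hSpos _)
    have hfin := Real.rpow_le_rpow (Real.rpow_nonneg hSnn _) hstep
      (le_of_lt (div_pos hq0 hp0))
    have e1 : (S ^ (p / q)) ^ (q / p) = S := by
      have hpne : p ≠ 0 := ne_of_gt hp0
      have hqne : q ≠ 0 := ne_of_gt hq0
      rw [← Real.rpow_mul hSnn, show p / q * (q / p) = 1 by field_simp, Real.rpow_one]
    have e2 : (c ^ p * T ^ (p / q)) ^ (q / p) = c ^ q * T := by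
      rw [Real.mul_rpow (Real.rpow_nonneg hc0 _) (Real.rpow_nonneg hTnn _),
        ← Real.rpow_mul hc0, ← Real.rpow_mul hTnn]
      have hpne : p ≠ 0 := ne_of_gt hp0
      have hqne : q ≠ 0 := ne_of_gt hq0
      rw [show p * (q / p) = q by field_simp, show p / q * (q / p) = 1 by field_simp,
        Real.rpow_one]
    rw [e1, e2] at hfin
    exact hfin

/-- If `1 ≤ p < q` and `u` is `p`-summing, then `u` is `q`-summing and `π_q(u) ≤ π_p(u)`. -/
theorem pSumming_mono
    {E F : Type*} [NormedAddCommGroup E] [NormedSpace ℝ E]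
    [NormedAddCommGroup F] [NormedSpace ℝ F]
    (p q : ℝ) (hp : 1 ≤ p) (hpq : p < q) (u : E →L[ℝ] F) (hu : IsPSumming p u) :
    IsPSumming q u ∧ piNorm q u ≤ piNorm p u := by
  obtain ⟨c, hc⟩ := hu
  have hsub := summingSet_subset p q hp hpq u
  refine ⟨⟨c, hsub hc⟩, ?_⟩
  exact csInf_le_csInf ⟨0, fun d hd => hd.1⟩ ⟨c, hc⟩ hsub
end

section
/- Let E, F be Banach spaces and u : E → F a bounded linear operator. Then u is absolutely summing (i.e., ∑ₙ ‖u xₙ‖ < ∞ whenever ∑ₙ xₙ is unconditionally convergent) if and only if u is 1-summing, and in that case π₁(u) = π_abs(u). -/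
open scoped BigOperators

/-- A series `∑ xₙ` is commutatively (unconditionally) convergent: every rearrangement
converges. -/
def UncondConvergent {E : Type*} [NormedAddCommGroup E] (x : ℕ → E) : Prop :=
  ∀ σ : Equiv.Perm ℕ, ∃ S : E,
    Filter.Tendsto (fun N => ∑ n ∈ Finset.range N, x (σ n)) Filter.atTop (nhds S)

/-- `u` is absolutely summing: `∑ ‖u xₙ‖ < ∞` for every commutatively convergent `∑ xₙ`. -/
def IsAbsSumming {E F : Type*} [NormedAddCommGroup E] [NormedSpace ℝ E]
    [NormedAddCommGroup F] [NormedSpace ℝ F] (u : E →L[ℝ] F) : Prop :=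
  ∀ x : ℕ → E, UncondConvergent x → Summable fun n => ‖u (x n)‖

/-- The absolutely summing constant `π_abs(u)`: supremum of `∑_{n<N} ‖u xₙ‖` over all finite
families with `sup_{εₙ=±1} ‖∑ εₙ xₙ‖ ≤ 1`. -/
noncomputable def piAbs {E F : Type*} [NormedAddCommGroup E] [NormedSpace ℝ E]
    [NormedAddCommGroup F] [NormedSpace ℝ F] (u : E →L[ℝ] F) : ℝ :=
  sSup {r | ∃ (N : ℕ) (x : Fin N → E),
    (∀ ε : Fin N → Bool, ‖∑ n : Fin N, (if ε n then (1 : ℝ) else -1) • x n‖ ≤ 1) ∧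
    r = ∑ n : Fin N, ‖u (x n)‖}


section Aux

variable {E : Type*} [NormedAddCommGroup E] [NormedSpace ℝ E]


/-- subset sums bounded by sign-sum bound -/
lemma subset_sum_le {N : ℕ} (x : Fin N → E) (C : ℝ)
    (h : ∀ ε : Fin N → Bool, ‖∑ n : Fin N, (if ε n then (1 : ℝ) else -1) • x n‖ ≤ C)
    (s : Finset (Fin N)) : ‖∑ n ∈ s, x n‖ ≤ C := by
  have key : (2:ℝ) • ∑ n ∈ s, x n
      = (∑ n : Fin N, (if (n ∈ s : Bool) then (1:ℝ) else -1) • x n)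
        + ∑ n : Fin N, (if (true : Bool) then (1:ℝ) else -1) • x n := by
    rw [← Finset.sum_add_distrib, Finset.smul_sum]
    rw [← Finset.sum_filter_add_sum_filter_not Finset.univ (fun n => n ∈ s)]
    have h1 : ∀ n ∈ Finset.univ.filter (fun n => n ∈ s),
        (if (n ∈ s : Bool) then (1:ℝ) else -1) • x n + (if (true : Bool) then (1:ℝ) else -1) • x n
        = (2:ℝ) • x n := by
      intro n hn; simp only [Finset.mem_filter] at hn
      simp only [hn.2, if_true]
      rw [← add_smul]; norm_num
    have h2 : ∀ n ∈ Finset.univ.filter (fun n => ¬ n ∈ s),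
        (if (n ∈ s : Bool) then (1:ℝ) else -1) • x n + (if (true : Bool) then (1:ℝ) else -1) • x n
        = 0 := by
      intro n hn; simp only [Finset.mem_filter] at hn
      simp [hn.2, ← add_smul]
    rw [Finset.sum_congr rfl h1, Finset.sum_congr rfl h2, Finset.sum_const_zero, add_zero]
    apply Finset.sum_congr _ (fun _ _ => rfl)
    ext n; simp
  have := norm_smul (2:ℝ) (∑ n ∈ s, x n)
  have hb : ‖(2:ℝ) • ∑ n ∈ s, x n‖ ≤ 2 * C := by
    rw [key]
    calc _ ≤ ‖∑ n : Fin N, (if (n ∈ s : Bool) then (1:ℝ) else -1) • x n‖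
        + ‖∑ n : Fin N, (if (true:Bool) then (1:ℝ) else -1) • x n‖ := norm_add_le _ _
      _ ≤ C + C := add_le_add (h _) (h _)
      _ = 2 * C := by ring
  rw [norm_smul] at hb
  simp only [Real.norm_ofNat] at hb
  linarith

/-- sign sums bounded by subset-sum bound -/
lemma sign_sum_le {N : ℕ} (x : Fin N → E) (B : ℝ)
    (h : ∀ s : Finset (Fin N), ‖∑ n ∈ s, x n‖ ≤ B) (ε : Fin N → Bool) :
    ‖∑ n : Fin N, (if ε n then (1 : ℝ) else -1) • x n‖ ≤ 2 * B := by
  have key : ∑ n : Fin N, (if ε n then (1 : ℝ) else -1) • x n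
      = (∑ n ∈ Finset.univ.filter (fun n => ε n = true), x n)
        - ∑ n ∈ Finset.univ.filter (fun n => ¬ ε n = true), x n := by
    rw [← Finset.sum_filter_add_sum_filter_not Finset.univ (fun n => ε n = true)]
    rw [sub_eq_add_neg, ← Finset.sum_neg_distrib]
    congr 1
    · exact Finset.sum_congr rfl (fun n hn => by
        simp only [Finset.mem_filter] at hn; simp [hn.2])
    · exact Finset.sum_congr rfl (fun n hn => by
        simp only [Finset.mem_filter] at hn
        simp [Bool.not_eq_true] at hn
        simp [hn])
  rw [key]
  calc _ ≤ ‖_‖ + ‖_‖ := norm_sub_le _ _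
    _ ≤ B + B := add_le_add (h _) (h _)
    _ = 2 * B := by ring

lemma dualSup_bddAbove {N : ℕ} (x : Fin N → E) :
    BddAbove (Set.range fun g : {g : StrongDual ℝ E // ‖g‖ ≤ 1} =>
      ∑ n : Fin N, |g.1 (x n)|) := by
  refine ⟨∑ n : Fin N, ‖x n‖, ?_⟩
  rintro r ⟨g, rfl⟩
  apply Finset.sum_le_sum
  intro n _
  rw [← Real.norm_eq_abs]
  calc ‖g.1 (x n)‖ ≤ ‖g.1‖ * ‖x n‖ := g.1.le_opNorm (x n)
    _ ≤ 1 * ‖x n‖ := mul_le_mul_of_nonneg_right g.2 (norm_nonneg _)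
    _ = ‖x n‖ := one_mul _

lemma dual_sum_le {N : ℕ} (x : Fin N → E) (C : ℝ)
    (h : ∀ ε : Fin N → Bool, ‖∑ n : Fin N, (if ε n then (1 : ℝ) else -1) • x n‖ ≤ C)
    (g : {g : StrongDual ℝ E // ‖g‖ ≤ 1}) :
    ∑ n : Fin N, |g.1 (x n)| ≤ C := by
  set ε : Fin N → Bool := fun n => decide (0 ≤ g.1 (x n)) with hε
  have key : ∑ n : Fin N, |g.1 (x n)| = g.1 (∑ n : Fin N, (if ε n then (1:ℝ) else -1) • x n) := by
    rw [map_sum]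
    apply Finset.sum_congr rfl
    intro n _
    rw [map_smul]
    by_cases hn : 0 ≤ g.1 (x n)
    · simp [hε, hn, abs_of_nonneg hn]
    · simp only [hε, hn, decide_false, if_neg Bool.false_ne_true]
      rw [abs_of_neg (lt_of_not_ge hn)]; simp
  rw [key]
  set y := ∑ n : Fin N, (if ε n then (1:ℝ) else -1) • x n with hy
  calc g.1 y ≤ |g.1 y| := le_abs_self _
    _ = ‖g.1 y‖ := (Real.norm_eq_abs _).symm
    _ ≤ ‖g.1‖ * ‖y‖ := g.1.le_opNorm _
    _ ≤ 1 * C := mul_le_mul g.2 (h ε) (norm_nonneg _) zero_le_one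
    _ = C := one_mul _

lemma sign_le_dualSup {N : ℕ} (x : Fin N → E) (ε : Fin N → Bool) :
    ‖∑ n : Fin N, (if ε n then (1 : ℝ) else -1) • x n‖ ≤
      ⨆ g : {g : StrongDual ℝ E // ‖g‖ ≤ 1}, ∑ n : Fin N, |g.1 (x n)| := by
  obtain ⟨g, hg1, hgx⟩ := exists_dual_vector'' ℝ (∑ n : Fin N, (if ε n then (1 : ℝ) else -1) • x n)
  have : ‖∑ n : Fin N, (if ε n then (1 : ℝ) else -1) • x n‖
      ≤ ∑ n : Fin N, |g (x n)| := by
    have hgx' : g (∑ n : Fin N, (if ε n then (1 : ℝ) else -1) • x n)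
        = ‖∑ n : Fin N, (if ε n then (1 : ℝ) else -1) • x n‖ := by exact_mod_cast hgx
    rw [← hgx']
    have : g (∑ n : Fin N, (if ε n then (1 : ℝ) else -1) • x n)
        = ∑ n : Fin N, (if ε n then (1 : ℝ) else -1) * g (x n) := by
      rw [map_sum]; exact Finset.sum_congr rfl fun n _ => by rw [map_smul]; rfl
    rw [this]
    apply Finset.sum_le_sum
    intro n _
    rcases Bool.eq_false_or_eq_true (ε n) with hb | hb <;> simp [hb] <;>
      [skip; exact neg_le_abs _] 
    exact le_abs_self _
  refine this.trans ?_
  exact le_ciSup (dualSup_bddAbove x) (⟨g, hg1⟩ : {g : StrongDual ℝ E // ‖g‖ ≤ 1})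

lemma geom_tail_le (K : ℕ) (T : Finset ℕ) (hT : ∀ k ∈ T, K ≤ k) :
    ∑ k ∈ T, ((1:ℝ)/2)^k ≤ 2 * (1/2)^K := by
  have hsub : T ⊆ Finset.Ico K (T.sup id + 1) := by
    intro k hk
    rw [Finset.mem_Ico]
    exact ⟨hT k hk, Nat.lt_succ_of_le (Finset.le_sup (f := id) hk)⟩
  calc ∑ k ∈ T, ((1:ℝ)/2)^k ≤ ∑ k ∈ Finset.Ico K (T.sup id + 1), ((1:ℝ)/2)^k :=
        Finset.sum_le_sum_of_subset_of_nonneg hsub (fun k _ _ => by positivity)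
    _ = ∑ j ∈ Finset.range (T.sup id + 1 - K), ((1:ℝ)/2)^(K + j) := by
        rw [Finset.sum_Ico_eq_sum_range]
    _ = (1/2)^K * ∑ j ∈ Finset.range (T.sup id + 1 - K), ((1:ℝ)/2)^j := by
        rw [Finset.mul_sum]
        exact Finset.sum_congr rfl fun j _ => pow_add _ _ _
    _ ≤ (1/2)^K * 2 := by
        apply mul_le_mul_of_nonneg_left (sum_geometric_two_le _) (by positivity)
    _ = 2 * (1/2)^K := mul_comm _ _

section blocks
variable (Nb : ℕ → ℕ) (xb : ∀ k, Fin (Nb k) → E)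

/-- blocks padded into a doubly-indexed family -/
def zfun : ℕ × ℕ → E := fun p => if h : p.2 < Nb p.1 then xb p.1 ⟨p.2, h⟩ else 0

lemma zfun_row (k : ℕ) (C : ℝ)
    (hsign : ∀ ε : Fin (Nb k) → Bool,
      ‖∑ n : Fin (Nb k), (if ε n then (1 : ℝ) else -1) • xb k n‖ ≤ C)
    (s : Finset ℕ) : ‖∑ i ∈ s, zfun Nb xb (k, i)‖ ≤ C := by
  have h1 : ∑ i ∈ s.filter (· < Nb k), zfun Nb xb (k, i) = ∑ i ∈ s, zfun Nb xb (k, i) := by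
    apply Finset.sum_subset (Finset.filter_subset _ _)
    intro i hi hni
    have : ¬ i < Nb k := by
      intro hlt; exact hni (Finset.mem_filter.2 ⟨hi, hlt⟩)
    exact dif_neg this
  rw [← h1]
  have hlt : ∀ m ∈ s.filter (· < Nb k), m < Nb k := fun m hm => (Finset.mem_filter.1 hm).2
  have h2 : ∑ i ∈ s.filter (· < Nb k), zfun Nb xb (k, i)
      = ∑ j ∈ (s.filter (· < Nb k)).attachFin hlt, xb k j := by
    exact Finset.sum_bij' (fun i hi => (⟨i, hlt i hi⟩ : Fin (Nb k)))
      (fun j _ => (j : ℕ))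
      (fun i hi => (Finset.mem_attachFin hlt).2 hi)
      (fun j hj => (Finset.mem_attachFin hlt).1 hj)
      (fun i hi => rfl) (fun j hj => rfl)
      (fun i hi => dif_pos (hlt i hi))
  rw [h2]
  exact subset_sum_le (xb k) C hsign _

lemma zfun_key (K : ℕ)
    (hs : ∀ k, ∀ ε : Fin (Nb k) → Bool,
      ‖∑ n : Fin (Nb k), (if ε n then (1 : ℝ) else -1) • xb k n‖ ≤ (1/2)^k)
    (S : Finset (ℕ × ℕ)) (hS : ∀ p ∈ S, p.1 < K → Nb p.1 ≤ p.2) :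
    ‖∑ p ∈ S, zfun Nb xb p‖ ≤ 2 * (1/2)^K := by
  have hmaps : ∀ p ∈ S, p.1 ∈ S.image Prod.fst := fun p hp => Finset.mem_image_of_mem _ hp
  rw [← Finset.sum_fiberwise_of_maps_to hmaps (zfun Nb xb)]
  set I := S.image Prod.fst with hI
  have hrow : ∀ k, k ∈ I → K ≤ k →
      ‖∑ p ∈ S.filter (fun p => p.1 = k), zfun Nb xb p‖ ≤ (1/2)^k := by
    intro k _ _
    have him : ∑ i ∈ (S.filter (fun p => p.1 = k)).image Prod.snd, zfun Nb xb (k, i)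
        = ∑ p ∈ S.filter (fun p => p.1 = k), zfun Nb xb (k, p.2) := by
      apply Finset.sum_image
      intro p hp q hq hpq
      have hp1 : p.1 = k := (Finset.mem_filter.1 hp).2
      have hq1 : q.1 = k := (Finset.mem_filter.1 hq).2
      exact Prod.ext (hp1.trans hq1.symm) hpq
    have hcongr : ∑ p ∈ S.filter (fun p => p.1 = k), zfun Nb xb (k, p.2)
        = ∑ p ∈ S.filter (fun p => p.1 = k), zfun Nb xb p := by
      apply Finset.sum_congr rfl
      intro p hp
      have hp1 : p.1 = k := (Finset.mem_filter.1 hp).2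
      rw [← hp1]
    rw [← hcongr, ← him]
    exact zfun_row Nb xb k _ (hs k) _
  have hzero : ∀ k ∈ I, ¬ K ≤ k →
      ∑ p ∈ S.filter (fun p => p.1 = k), zfun Nb xb p = 0 := by
    intro k _ hk
    apply Finset.sum_eq_zero
    intro p hp
    rcases Finset.mem_filter.1 hp with ⟨hpS, hp1⟩
    have : Nb p.1 ≤ p.2 := hS p hpS (hp1 ▸ lt_of_not_ge hk)
    exact dif_neg (not_lt.2 this)
  calc ‖∑ k ∈ I, ∑ p ∈ S.filter (fun p => p.1 = k), zfun Nb xb p‖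
      ≤ ∑ k ∈ I, ‖∑ p ∈ S.filter (fun p => p.1 = k), zfun Nb xb p‖ := norm_sum_le _ _
    _ = ∑ k ∈ I.filter (K ≤ ·), ‖∑ p ∈ S.filter (fun p => p.1 = k), zfun Nb xb p‖ := by
        symm
        apply Finset.sum_subset (Finset.filter_subset _ _)
        intro k hk hnk
        have : ¬ K ≤ k := fun h => hnk (Finset.mem_filter.2 ⟨hk, h⟩)
        rw [hzero k hk this, norm_zero]
    _ ≤ ∑ k ∈ I.filter (K ≤ ·), ((1:ℝ)/2)^k := by
        apply Finset.sum_le_sum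
        intro k hk
        rcases Finset.mem_filter.1 hk with ⟨hkI, hKk⟩
        exact hrow k hkI hKk
    _ ≤ 2 * (1/2)^K :=
        geom_tail_le K _ (fun k hk => (Finset.mem_filter.1 hk).2)

end blocks

lemma list_sum_getD {M : Type*} [AddCommMonoid M] (l : List ℕ) (f : ℕ → M) :
    ∑ i ∈ Finset.range l.length, f (l.getD i 0) = (l.map f).sum := by
  induction l with
  | nil => simp
  | cons a t ih =>
    rw [List.length_cons, Finset.sum_range_succ']
    simp only [List.getD_cons_succ, List.getD_cons_zero, List.map_cons, List.sum_cons, ih]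
    exact add_comm _ _

lemma sort_map_sum {M : Type*} [AddCommMonoid M] (s : Finset ℕ) (f : ℕ → M) :
    ((s.sort (·≤·)).map f).sum = ∑ n ∈ s, f n := by
  have h : (↑(s.sort (·≤·)) : Multiset ℕ) = s.1 := Finset.sort_eq s _
  calc (List.map f (s.sort (·≤·))).sum
      = (Multiset.map f (↑(s.sort (·≤·)) : Multiset ℕ)).sum := by
        rw [Multiset.map_coe, Multiset.sum_coe]
    _ = (Multiset.map f s.1).sum := by rw [h]
    _ = ∑ n ∈ s, f n := (Finset.sum_eq_multiset_sum s f).symm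

lemma uncond_subset_bdd {E : Type*} [NormedAddCommGroup E] (x : ℕ → E)
    (h : UncondConvergent x) : ∃ B : ℝ, ∀ s : Finset ℕ, ‖∑ n ∈ s, x n‖ ≤ B := by
  by_contra hb
  push_neg at hb
  have step : ∀ m : ℕ, ∃ s : Finset ℕ, (∀ n ∈ s, m ≤ n) ∧ 1 < ‖∑ n ∈ s, x n‖ := by
    intro m
    obtain ⟨s, hs⟩ := hb (1 + ∑ n ∈ Finset.range m, ‖x n‖)
    refine ⟨s.filter (m ≤ ·), fun n hn => (Finset.mem_filter.1 hn).2, ?_⟩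
    have hsplit : ∑ n ∈ s, x n
        = ∑ n ∈ s.filter (m ≤ ·), x n + ∑ n ∈ s.filter (fun n => ¬ m ≤ n), x n :=
      (Finset.sum_filter_add_sum_filter_not s _ x).symm
    have hsmall : ‖∑ n ∈ s.filter (fun n => ¬ m ≤ n), x n‖ ≤ ∑ n ∈ Finset.range m, ‖x n‖ := by
      calc ‖∑ n ∈ s.filter (fun n => ¬ m ≤ n), x n‖
          ≤ ∑ n ∈ s.filter (fun n => ¬ m ≤ n), ‖x n‖ := norm_sum_le _ _
        _ ≤ ∑ n ∈ Finset.range m, ‖x n‖ := by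
            apply Finset.sum_le_sum_of_subset_of_nonneg
            · intro n hn
              rcases Finset.mem_filter.1 hn with ⟨_, hn2⟩
              exact Finset.mem_range.2 (lt_of_not_ge hn2)
            · exact fun _ _ _ => norm_nonneg _
    have htri : ‖∑ n ∈ s, x n‖ ≤ ‖∑ n ∈ s.filter (m ≤ ·), x n‖
        + ‖∑ n ∈ s.filter (fun n => ¬ m ≤ n), x n‖ := by
      rw [hsplit]; exact norm_add_le _ _
    linarith
  choose Sf hSf1 hSf2 using step
  have hex : ∃ m : ℕ → ℕ, m 0 = 0 ∧ ∀ k, m (k+1) = (Sf (m k)).sup id + 1 :=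
    ⟨fun k => Nat.rec 0 (fun _ mk => (Sf mk).sup id + 1) k, rfl, fun _ => rfl⟩
  obtain ⟨mfun, hm0, hmsucc⟩ := hex
  set S : ℕ → Finset ℕ := fun k => Sf (mfun k) with hSdef
  have hSge : ∀ k, ∀ n ∈ S k, mfun k ≤ n := fun k => hSf1 (mfun k)
  have hSnorm : ∀ k, 1 < ‖∑ n ∈ S k, x n‖ := fun k => hSf2 (mfun k)
  have hSne : ∀ k, (S k).Nonempty := by
    intro k
    rcases Finset.eq_empty_or_nonempty (S k) with he | hne
    · exfalso
      have h1 := hSnorm k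
      rw [he, Finset.sum_empty, norm_zero] at h1
      linarith
    · exact hne
  have hSlt : ∀ k, ∀ n ∈ S k, n < mfun (k+1) := by
    intro k n hn
    rw [hmsucc]
    exact Nat.lt_succ_of_le (Finset.le_sup (f := id) hn)
  have hmlt : ∀ k, mfun k < mfun (k+1) := by
    intro k
    obtain ⟨n, hn⟩ := hSne k
    exact lt_of_le_of_lt (hSge k n hn) (hSlt k n hn)
  have hmono : StrictMono mfun := strictMono_nat_of_lt_succ hmlt
  have hmk : ∀ k, k ≤ mfun k := fun k => hmono.le_apply
  have hSsub : ∀ k, S k ⊆ Finset.Ico (mfun k) (mfun (k+1)) :=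
    fun k n hn => Finset.mem_Ico.2 ⟨hSge k n hn, hSlt k n hn⟩
  set l : ℕ → List ℕ := fun k =>
    (S k).sort (·≤·) ++ ((Finset.Ico (mfun k) (mfun (k+1))) \ S k).sort (·≤·) with hldef
  have hcard : ∀ k, (S k).card ≤ mfun (k+1) - mfun k := by
    intro k
    rw [← Nat.card_Ico]
    exact Finset.card_le_card (hSsub k)
  have hlen : ∀ k, (l k).length = mfun (k+1) - mfun k := by
    intro k
    rw [hldef]
    simp only [List.length_append, Finset.length_sort]
    rw [Finset.card_sdiff_of_subset (hSsub k), Nat.card_Ico]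
    have := hcard k
    omega
  have hmem : ∀ k n, n ∈ l k ↔ n ∈ Finset.Ico (mfun k) (mfun (k+1)) := by
    intro k n
    rw [hldef]
    simp only [List.mem_append, Finset.mem_sort, Finset.mem_sdiff]
    constructor
    · rintro (h1 | ⟨h1, _⟩)
      exacts [hSsub k h1, h1]
    · intro hIco
      by_cases hn : n ∈ S k
      · exact Or.inl hn
      · exact Or.inr ⟨hIco, hn⟩
  have hnodup : ∀ k, (l k).Nodup := by
    intro k
    rw [hldef]
    apply List.Nodup.append (Finset.sort_nodup _ _) (Finset.sort_nodup _ _)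
    intro a ha hb2
    rw [Finset.mem_sort] at ha hb2
    exact (Finset.mem_sdiff.1 hb2).2 ha
  set blk : ℕ → ℕ := fun j => Nat.findGreatest (fun k => mfun k ≤ j) j with hblkdef
  have hblk1 : ∀ j, mfun (blk j) ≤ j := by
    intro j
    exact Nat.findGreatest_spec (P := fun k => mfun k ≤ j) (Nat.zero_le j)
      (by show mfun 0 ≤ j; rw [hm0]; exact Nat.zero_le j)
  have hblk2 : ∀ j, j < mfun (blk j + 1) := by
    intro j
    by_contra hle
    push_neg at hle
    have h1 : blk j + 1 ≤ j := le_trans (hmk _) hle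
    have h2 : blk j + 1 ≤ blk j := Nat.le_findGreatest h1 hle
    omega
  have blk_eq : ∀ k j, mfun k ≤ j → j < mfun (k+1) → blk j = k := by
    intro k j h1 h2
    rcases lt_trichotomy (blk j) k with hlt | he | hgt
    · exfalso
      have h3 : mfun (blk j + 1) ≤ mfun k := hmono.monotone hlt
      have h4 := hblk2 j
      omega
    · exact he
    · exfalso
      have h3 : mfun (k + 1) ≤ mfun (blk j) := hmono.monotone hgt
      have h4 := hblk1 j
      omega
  set σf : ℕ → ℕ := fun j => (l (blk j)).getD (j - mfun (blk j)) 0 with hσdef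
  have hidx : ∀ j, j - mfun (blk j) < (l (blk j)).length := by
    intro j
    rw [hlen]
    have := hblk1 j
    have := hblk2 j
    omega
  have hσmem : ∀ j, σf j ∈ Finset.Ico (mfun (blk j)) (mfun (blk j + 1)) := by
    intro j
    rw [← hmem]
    rw [hσdef]
    simp only []
    rw [List.getD_eq_getElem _ _ (hidx j)]
    exact List.getElem_mem _
  have hinj : Function.Injective σf := by
    intro j j' he
    have hbj : blk (σf j) = blk j := by
      rcases Finset.mem_Ico.1 (hσmem j) with ⟨h1, h2⟩
      exact blk_eq _ _ h1 h2
    have hbj' : blk (σf j') = blk j' := by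
      rcases Finset.mem_Ico.1 (hσmem j') with ⟨h1, h2⟩
      exact blk_eq _ _ h1 h2
    have hbb : blk j = blk j' := by rw [← hbj, ← hbj', he]
    have he2 : (l (blk j)).getD (j - mfun (blk j)) 0
        = (l (blk j)).getD (j' - mfun (blk j)) 0 := by
      have h3 := he
      rw [hσdef] at h3
      simp only [] at h3
      rw [← hbb] at h3
      exact h3
    have hi1 := hidx j
    have hi2 : j' - mfun (blk j) < (l (blk j)).length := by rw [hbb]; exact hidx j'
    rw [List.getD_eq_getElem _ _ hi1, List.getD_eq_getElem _ _ hi2] at he2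
    have heq : j - mfun (blk j) = j' - mfun (blk j) := (hnodup _).getElem_inj_iff.1 he2
    have ha2 := hblk1 j
    have hb2 : mfun (blk j) ≤ j' := by rw [hbb]; exact hblk1 j'
    omega
  have hsurj : Function.Surjective σf := by
    intro n
    have hn : n ∈ l (blk n) := (hmem _ n).2 (Finset.mem_Ico.2 ⟨hblk1 n, hblk2 n⟩)
    obtain ⟨i, hi, hget⟩ := List.mem_iff_getElem.1 hn
    refine ⟨mfun (blk n) + i, ?_⟩
    have h1 : mfun (blk n) ≤ mfun (blk n) + i := Nat.le_add_right _ _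
    have h2 : mfun (blk n) + i < mfun (blk n + 1) := by
      have := hlen (blk n)
      have := hblk1 n
      have := hblk2 n
      omega
    have hbe : blk (mfun (blk n) + i) = blk n := blk_eq _ _ h1 h2
    rw [hσdef]
    simp only []
    rw [hbe, Nat.add_sub_cancel_left, List.getD_eq_getElem _ _ hi]
    exact hget
  set σ : Equiv.Perm ℕ := Equiv.ofBijective σf ⟨hinj, hsurj⟩ with hσ
  obtain ⟨L, hL⟩ := h σ
  have hC := hL.cauchySeq
  rw [Metric.cauchySeq_iff] at hC
  obtain ⟨N₀, hN₀⟩ := hC 1 one_pos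
  set k := N₀ with hk
  set a := mfun k with ha
  set b := a + (S k).card with hbdef
  have hab : a ≤ b := Nat.le_add_right _ _
  have hblkab : ∀ i, i < (S k).card → blk (a + i) = k := by
    intro i hi
    apply blk_eq
    · exact Nat.le_add_right _ _
    · have := hcard k
      omega
  have hsum : ∑ j ∈ Finset.Ico a b, x (σf j) = ∑ n ∈ S k, x n := by
    rw [Finset.sum_Ico_eq_sum_range]
    have hba : b - a = (S k).card := by omega
    rw [hba]
    have hterm : ∀ i ∈ Finset.range (S k).card,
        x (σf (a + i)) = x (((S k).sort (·≤·)).getD i 0) := by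
      intro i hi
      rw [Finset.mem_range] at hi
      congr 1
      rw [hσdef]
      simp only []
      rw [hblkab i hi, Nat.add_sub_cancel_left]
      rw [hldef]
      simp only []
      rw [List.getD_append _ _ _ _ (by rw [Finset.length_sort]; exact hi)]
    rw [Finset.sum_congr rfl hterm]
    have hlen2 : ((S k).sort (·≤·)).length = (S k).card := Finset.length_sort _
    rw [← hlen2, list_sum_getD, sort_map_sum]
  have hge : 1 < dist (∑ n ∈ Finset.range b, x (σ n)) (∑ n ∈ Finset.range a, x (σ n)) := by
    rw [dist_eq_norm, ← Finset.sum_Ico_eq_sub _ hab]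
    have : ∀ j, σ j = σf j := fun j => rfl
    calc 1 < ‖∑ n ∈ S k, x n‖ := hSnorm k
      _ = ‖∑ j ∈ Finset.Ico a b, x (σ j)‖ := by
          rw [← hsum]
          apply congrArg
          exact Finset.sum_congr rfl fun j _ => by rw [this]
  have hlt := hN₀ b (le_trans (hmk k) hab) a (hmk k)
  linarith

end Aux


section Main

variable {E F : Type*} [NormedAddCommGroup E] [NormedSpace ℝ E]
  [NormedAddCommGroup F] [NormedSpace ℝ F]

instance dualBallNonempty : Nonempty {g : StrongDual ℝ E // ‖g‖ ≤ 1} :=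
  ⟨⟨0, by simp⟩⟩

/-- the set whose sup is `piAbs` -/
def piAbsSet (u : E →L[ℝ] F) : Set ℝ :=
  {r | ∃ (N : ℕ) (x : Fin N → E),
    (∀ ε : Fin N → Bool, ‖∑ n : Fin N, (if ε n then (1 : ℝ) else -1) • x n‖ ≤ 1) ∧
    r = ∑ n : Fin N, ‖u (x n)‖}

lemma piAbs_eq (u : E →L[ℝ] F) : piAbs u = sSup (piAbsSet u) := rfl

lemma zero_mem_PSet (u : E →L[ℝ] F) : (0:ℝ) ∈ piAbsSet u := by
  refine ⟨0, fun i => i.elim0, ?_, by simp⟩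
  intro ε
  simp

lemma mem_summingSet_iff {u : E →L[ℝ] F} {c : ℝ} :
    c ∈ summingSet 1 u ↔ 0 ≤ c ∧ ∀ (N : ℕ) (x : Fin N → E),
      ∑ n : Fin N, ‖u (x n)‖ ≤
        c * ⨆ g : {g : StrongDual ℝ E // ‖g‖ ≤ 1}, ∑ n : Fin N, |g.1 (x n)| := by
  simp only [summingSet, Set.mem_setOf_eq, Real.rpow_one]

lemma summing_upper {u : E →L[ℝ] F} {c : ℝ} (hc : c ∈ summingSet 1 u) :
    ∀ r ∈ piAbsSet u, r ≤ c := by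
  rw [mem_summingSet_iff] at hc
  rintro r ⟨N, x, hcon, rfl⟩
  have hT : (⨆ g : {g : StrongDual ℝ E // ‖g‖ ≤ 1}, ∑ n : Fin N, |g.1 (x n)|) ≤ 1 :=
    ciSup_le (fun g => dual_sum_le x 1 hcon g)
  calc ∑ n : Fin N, ‖u (x n)‖
      ≤ c * ⨆ g : {g : StrongDual ℝ E // ‖g‖ ≤ 1}, ∑ n : Fin N, |g.1 (x n)| := hc.2 N x
    _ ≤ c * 1 := mul_le_mul_of_nonneg_left hT hc.1
    _ = c := mul_one _

lemma smul_sign_sum {N : ℕ} (x : Fin N → E) (t : ℝ) (ε : Fin N → Bool) :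
    ∑ n : Fin N, (if ε n then (1 : ℝ) else -1) • (t • x n)
      = t • ∑ n : Fin N, (if ε n then (1 : ℝ) else -1) • x n := by
  rw [Finset.smul_sum]
  exact Finset.sum_congr rfl fun n _ => smul_comm _ _ _

lemma scaled_mem_PSet {u : E →L[ℝ] F} {N : ℕ} {x : Fin N → E} {t : ℝ} (ht : 0 ≤ t)
    (hcon : ∀ ε : Fin N → Bool,
      ‖∑ n : Fin N, (if ε n then (1 : ℝ) else -1) • (t • x n)‖ ≤ 1) :
    t * ∑ n : Fin N, ‖u (x n)‖ ∈ piAbsSet u := by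
  refine ⟨N, fun n => t • x n, hcon, ?_⟩
  rw [Finset.mul_sum]
  exact Finset.sum_congr rfl fun n _ => by rw [map_smul, norm_smul, Real.norm_eq_abs,
    abs_of_nonneg ht]

lemma sSup_PSet_mem (u : E →L[ℝ] F) (hb : BddAbove (piAbsSet u)) :
    sSup (piAbsSet u) ∈ summingSet 1 u := by
  have hne : (piAbsSet u).Nonempty := ⟨0, zero_mem_PSet u⟩
  set q := sSup (piAbsSet u) with hq
  have hq0 : 0 ≤ q := le_csSup hb (zero_mem_PSet u)
  rw [mem_summingSet_iff]
  refine ⟨hq0, ?_⟩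
  intro N x
  set T := ⨆ g : {g : StrongDual ℝ E // ‖g‖ ≤ 1}, ∑ n : Fin N, |g.1 (x n)| with hTdef
  have hT0 : 0 ≤ T := by
    have := le_ciSup (dualSup_bddAbove x) (⟨0, by simp⟩ : {g : StrongDual ℝ E // ‖g‖ ≤ 1})
    simpa using this
  set M := ⨆ ε : Fin N → Bool, ‖∑ n : Fin N, (if ε n then (1 : ℝ) else -1) • x n‖ with hMdef
  have hMb : BddAbove (Set.range fun ε : Fin N → Bool =>
      ‖∑ n : Fin N, (if ε n then (1 : ℝ) else -1) • x n‖) :=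
    Set.Finite.bddAbove (Set.finite_range _)
  have hMle : ∀ ε : Fin N → Bool, ‖∑ n : Fin N, (if ε n then (1 : ℝ) else -1) • x n‖ ≤ M :=
    fun ε => le_ciSup hMb ε
  have hM0 : 0 ≤ M := le_trans (norm_nonneg _) (hMle fun _ => true)
  have hMT : M ≤ T := ciSup_le fun ε => sign_le_dualSup x ε
  have hA0 : 0 ≤ ∑ n : Fin N, ‖u (x n)‖ :=
    Finset.sum_nonneg fun _ _ => norm_nonneg _
  rcases eq_or_lt_of_le hM0 with hM | hM
  · -- M = 0
    have hAle : ∀ t : ℝ, 0 < t → t * ∑ n : Fin N, ‖u (x n)‖ ≤ q := by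
      intro t ht
      apply le_csSup hb
      apply scaled_mem_PSet (le_of_lt ht)
      intro ε
      rw [smul_sign_sum, norm_smul, Real.norm_eq_abs, abs_of_nonneg (le_of_lt ht)]
      have h1 : ‖∑ n : Fin N, (if ε n then (1 : ℝ) else -1) • x n‖ ≤ 0 := by
        rw [hM]; exact hMle ε
      have : t * ‖∑ n : Fin N, (if ε n then (1 : ℝ) else -1) • x n‖ ≤ t * 0 :=
        mul_le_mul_of_nonneg_left h1 (le_of_lt ht)
      linarith
    have hA : ∑ n : Fin N, ‖u (x n)‖ ≤ 0 := by
      by_contra hA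
      push_neg at hA
      have h1 := hAle ((q + 1) / ∑ n : Fin N, ‖u (x n)‖) (by positivity)
      rw [div_mul_cancel₀ _ (ne_of_gt hA)] at h1
      linarith
    exact le_trans hA (mul_nonneg hq0 hT0)
  · -- M > 0
    have hmem : M⁻¹ * ∑ n : Fin N, ‖u (x n)‖ ∈ piAbsSet u := by
      apply scaled_mem_PSet (le_of_lt (inv_pos.2 hM))
      intro ε
      rw [smul_sign_sum, norm_smul, Real.norm_eq_abs, abs_of_nonneg (le_of_lt (inv_pos.2 hM))]
      calc M⁻¹ * ‖∑ n : Fin N, (if ε n then (1 : ℝ) else -1) • x n‖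
          ≤ M⁻¹ * M := mul_le_mul_of_nonneg_left (hMle ε) (le_of_lt (inv_pos.2 hM))
        _ = 1 := inv_mul_cancel₀ (ne_of_gt hM)
    have h1 : M⁻¹ * ∑ n : Fin N, ‖u (x n)‖ ≤ q := le_csSup hb hmem
    have h2 : ∑ n : Fin N, ‖u (x n)‖ ≤ q * M := by
      have := mul_le_mul_of_nonneg_left h1 (le_of_lt hM)
      rw [← mul_assoc, mul_inv_cancel₀ (ne_of_gt hM), one_mul] at this
      linarith [this]
    calc ∑ n : Fin N, ‖u (x n)‖ ≤ q * M := h2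
      _ ≤ q * T := mul_le_mul_of_nonneg_left hMT hq0

lemma psumming_abs (u : E →L[ℝ] F) (h : IsPSumming 1 u) : IsAbsSumming u := by
  obtain ⟨c, hc⟩ := h
  rw [mem_summingSet_iff] at hc
  intro x hx
  obtain ⟨B, hB⟩ := uncond_subset_bdd x hx
  apply summable_of_sum_range_le (c := c * (2 * B)) (fun n => norm_nonneg _)
  intro n
  have h1 : ∑ i ∈ Finset.range n, ‖u (x i)‖ = ∑ i : Fin n, ‖u (x (i : ℕ))‖ :=
    (Fin.sum_univ_eq_sum_range (fun i => ‖u (x i)‖) n).symm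
  rw [h1]
  have hsub : ∀ s : Finset (Fin n), ‖∑ i ∈ s, x (i : ℕ)‖ ≤ B := by
    intro s
    have himg : ∑ m ∈ s.image (fun i : Fin n => (i : ℕ)), x m = ∑ i ∈ s, x (i : ℕ) :=
      Finset.sum_image (fun i _ j _ h => Fin.val_injective h)
    rw [← himg]
    exact hB _
  have hsign : ∀ ε : Fin n → Bool,
      ‖∑ i : Fin n, (if ε i then (1 : ℝ) else -1) • x (i : ℕ)‖ ≤ 2 * B :=
    sign_sum_le _ B hsub
  have hT : (⨆ g : {g : StrongDual ℝ E // ‖g‖ ≤ 1},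
      ∑ i : Fin n, |g.1 (x (i : ℕ))|) ≤ 2 * B :=
    ciSup_le fun g => dual_sum_le _ (2 * B) hsign g
  calc ∑ i : Fin n, ‖u (x (i : ℕ))‖
      ≤ c * ⨆ g : {g : StrongDual ℝ E // ‖g‖ ≤ 1},
          ∑ i : Fin n, |g.1 (x (i : ℕ))| := hc.2 n _
    _ ≤ c * (2 * B) := mul_le_mul_of_nonneg_left hT hc.1

lemma abs_bdd [CompleteSpace E] (u : E →L[ℝ] F) (h : IsAbsSumming u) : BddAbove (piAbsSet u) := by
  by_contra hb
  rw [not_bddAbove_iff] at hb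
  have hstep : ∀ k : ℕ, ∃ (n : ℕ) (y : Fin n → E),
      (∀ ε : Fin n → Bool, ‖∑ i : Fin n, (if ε i then (1 : ℝ) else -1) • y i‖ ≤ (1/2:ℝ)^k) ∧
      1 ≤ ∑ i : Fin n, ‖u (y i)‖ := by
    intro k
    obtain ⟨r, hr, hgt⟩ := hb ((2:ℝ)^k)
    obtain ⟨N, x, hcon, rfl⟩ := hr
    refine ⟨N, fun i => ((1/2:ℝ)^k) • x i, ?_, ?_⟩
    · intro ε
      rw [smul_sign_sum, norm_smul, Real.norm_eq_abs, abs_of_nonneg (by positivity)]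
      calc ((1:ℝ)/2)^k * ‖∑ i : Fin N, (if ε i then (1 : ℝ) else -1) • x i‖
          ≤ (1/2:ℝ)^k * 1 := mul_le_mul_of_nonneg_left (hcon ε) (by positivity)
        _ = (1/2:ℝ)^k := mul_one _
    · have hA : ∑ i : Fin N, ‖u (((1/2:ℝ)^k) • x i)‖
          = (1/2:ℝ)^k * ∑ i : Fin N, ‖u (x i)‖ := by
        rw [Finset.mul_sum]
        exact Finset.sum_congr rfl fun i _ => by
          rw [map_smul, norm_smul, Real.norm_eq_abs, abs_of_nonneg (by positivity)]
      rw [hA]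
      have h2 : ((1:ℝ)/2)^k * (2:ℝ)^k ≤ (1/2:ℝ)^k * ∑ i : Fin N, ‖u (x i)‖ :=
        mul_le_mul_of_nonneg_left (le_of_lt hgt) (by positivity)
      calc (1:ℝ) = ((1:ℝ)/2)^k * (2:ℝ)^k := by
            rw [← mul_pow]; norm_num
        _ ≤ _ := h2
  choose Nb xb hsign hbig using hstep
  let e : ℕ ≃ ℕ × ℕ := (Denumerable.eqv (ℕ × ℕ)).symm
  set xs : ℕ → E := fun n => zfun Nb xb (e n) with hxs
  have hUC : UncondConvergent xs := by
    intro σ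
    apply cauchySeq_tendsto_of_complete
    rw [Metric.cauchySeq_iff']
    intro ε hε
    obtain ⟨K, hK⟩ := exists_pow_lt_of_lt_one (half_pos hε) (one_half_lt_one (α := ℝ))
    set head : Finset (ℕ × ℕ) :=
      (Finset.range K).biUnion (fun k => (Finset.range (Nb k)).image (fun i => (k, i)))
      with hhead
    set N₀ := (head.image (fun p => σ.symm (e.symm p))).sup id + 1 with hN₀
    refine ⟨N₀, ?_⟩
    intro n hn
    rw [dist_eq_norm, ← Finset.sum_Ico_eq_sub _ hn]
    have hinj : Set.InjOn (fun j => e (σ j)) (Finset.Ico N₀ n) :=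
      fun a _ b _ hab => σ.injective (e.injective hab)
    have himg : ∑ p ∈ (Finset.Ico N₀ n).image (fun j => e (σ j)), zfun Nb xb p
        = ∑ j ∈ Finset.Ico N₀ n, xs (σ j) := Finset.sum_image hinj
    rw [← himg]
    have hS : ∀ p ∈ (Finset.Ico N₀ n).image (fun j => e (σ j)), p.1 < K → Nb p.1 ≤ p.2 := by
      intro p hp hpK
      by_contra hplt
      push_neg at hplt
      obtain ⟨j, hj, rfl⟩ := Finset.mem_image.1 hp
      have hmem : e (σ j) ∈ head := by
        rw [hhead]
        apply Finset.mem_biUnion.2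
        refine ⟨(e (σ j)).1, Finset.mem_range.2 hpK, ?_⟩
        apply Finset.mem_image.2
        exact ⟨(e (σ j)).2, Finset.mem_range.2 hplt, rfl⟩
      have hjle : j ≤ (head.image (fun p => σ.symm (e.symm p))).sup id := by
        have : σ.symm (e.symm (e (σ j))) ∈ head.image (fun p => σ.symm (e.symm p)) :=
          Finset.mem_image_of_mem _ hmem
        rw [Equiv.symm_apply_apply, Equiv.symm_apply_apply] at this
        exact Finset.le_sup (f := id) this
      have hjge : N₀ ≤ j := (Finset.mem_Ico.1 hj).1
      omega
    calc ‖∑ p ∈ (Finset.Ico N₀ n).image (fun j => e (σ j)), zfun Nb xb p‖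
        ≤ 2 * (1/2)^K := zfun_key Nb xb K hsign _ hS
      _ < 2 * (ε/2) := by linarith
      _ = ε := by ring
  have hsm := h xs hUC
  obtain ⟨K, hK⟩ := exists_nat_gt (∑' n, ‖u (xs n)‖)
  set head : Finset (ℕ × ℕ) :=
    (Finset.range K).biUnion (fun k => (Finset.range (Nb k)).image (fun i => (k, i)))
    with hhead
  have h1 : ∑ n ∈ head.image (fun p => e.symm p), ‖u (xs n)‖
      = ∑ p ∈ head, ‖u (zfun Nb xb p)‖ := by
    rw [Finset.sum_image (fun a _ b _ hab => e.symm.injective hab)]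
    apply Finset.sum_congr rfl
    intro p _
    rw [hxs]
    simp only []
    rw [Equiv.apply_symm_apply]
  have h2 : (K : ℝ) ≤ ∑ p ∈ head, ‖u (zfun Nb xb p)‖ := by
    rw [hhead, Finset.sum_biUnion]
    · have hinner : ∀ k ∈ Finset.range K,
          (1:ℝ) ≤ ∑ p ∈ (Finset.range (Nb k)).image (fun i => (k, i)), ‖u (zfun Nb xb p)‖ := by
        intro k _
        rw [Finset.sum_image (fun a _ b _ hab => (Prod.mk.injEq _ _ _ _ ▸ hab : _) |>.2)]
        have : ∑ i ∈ Finset.range (Nb k), ‖u (zfun Nb xb (k, i))‖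
            = ∑ i : Fin (Nb k), ‖u (xb k i)‖ := by
          rw [← Fin.sum_univ_eq_sum_range (fun i => ‖u (zfun Nb xb (k, i))‖) (Nb k)]
          apply Finset.sum_congr rfl
          intro i _
          congr 1
          show u (zfun Nb xb (k, (i : ℕ))) = u (xb k i)
          congr 1
          exact dif_pos i.isLt
        rw [this]
        exact hbig k
      calc (K : ℝ) = ∑ _k ∈ Finset.range K, (1:ℝ) := by simp
        _ ≤ _ := Finset.sum_le_sum hinner
    · intro a _ b _ hab
      apply Finset.disjoint_left.2
      intro p hpa hpb
      obtain ⟨i, _, rfl⟩ := Finset.mem_image.1 hpa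
      obtain ⟨i', _, hi'⟩ := Finset.mem_image.1 hpb
      exact hab ((congrArg Prod.fst hi').symm)
  have h3 : ∑ n ∈ head.image (fun p => e.symm p), ‖u (xs n)‖ ≤ ∑' n, ‖u (xs n)‖ :=
    Summable.sum_le_tsum _ (fun i _ => norm_nonneg _) hsm
  rw [h1] at h3
  linarith

end Main

/-- `u` is absolutely summing iff `u` is `1`-summing, and then `π₁(u) = π_abs(u)`. -/
theorem absSumming_iff_one_summing
    {E F : Type*} [NormedAddCommGroup E] [NormedSpace ℝ E] [CompleteSpace E]
    [NormedAddCommGroup F] [NormedSpace ℝ F] [CompleteSpace F]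
    (u : E →L[ℝ] F) :
    (IsAbsSumming u ↔ IsPSumming 1 u) ∧
      (IsAbsSumming u → piNorm 1 u = piAbs u) := by
  constructor
  · constructor
    · intro h
      exact ⟨_, sSup_PSet_mem u (abs_bdd u h)⟩
    · exact psumming_abs u
  · intro h
    have hb := abs_bdd u h
    have hq := sSup_PSet_mem u hb
    have hne : (piAbsSet u).Nonempty := ⟨0, zero_mem_PSet u⟩
    have hbl : BddBelow (summingSet 1 u) := ⟨0, fun c hc => hc.1⟩
    rw [piAbs_eq]
    apply le_antisymm
    · exact csInf_le hbl hq
    · apply le_csInf ⟨_, hq⟩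
      intro c hc
      exact csSup_le hne (summing_upper hc)
end

section
/- Let H₁, H₂ be Hilbert spaces and u : H₁ → H₂ a bounded linear operator. If u is 2-summing, then u is Hilbert-Schmidt, and conversely every Hilbert-Schmidt operator u : H₁ → H₂ is 2-summing with π₂(u) equal to the Hilbert-Schmidt norm of u. -/
open scoped BigOperators

section Aux

set_option linter.unusedSectionVars false
set_option maxHeartbeats 1000000

open scoped RealInnerProductSpace

namespace TwoSumAux

variable {H₁ H₂ : Type*} [NormedAddCommGroup H₁] [InnerProductSpace ℝ H₁] [CompleteSpace H₁]
  [NormedAddCommGroup H₂] [InnerProductSpace ℝ H₂] [CompleteSpace H₂]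

instance : Nonempty {g : StrongDual ℝ H₁ // ‖g‖ ≤ 1} :=
  ⟨0, by simp⟩

noncomputable def S2 {N : ℕ} (x : Fin N → H₁) : ℝ :=
  ⨆ g : {g : StrongDual ℝ H₁ // ‖g‖ ≤ 1}, ∑ n : Fin N, |g.1 (x n)| ^ (2:ℝ)

lemma rpow_two (a : ℝ) : a ^ (2:ℝ) = a ^ 2 := by
  rw [show (2:ℝ) = ((2:ℕ):ℝ) by norm_num, Real.rpow_natCast]

lemma bddAbove_S2 {N : ℕ} (x : Fin N → H₁) :
    BddAbove (Set.range fun g : {g : StrongDual ℝ H₁ // ‖g‖ ≤ 1} =>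
      ∑ n : Fin N, |g.1 (x n)| ^ (2:ℝ)) := by
  refine ⟨∑ n : Fin N, ‖x n‖ ^ (2:ℝ), ?_⟩
  rintro _ ⟨g, rfl⟩
  refine Finset.sum_le_sum fun n _ => ?_
  have h1 : |g.1 (x n)| ≤ ‖x n‖ := by
    calc |g.1 (x n)| = ‖g.1 (x n)‖ := rfl
      _ ≤ ‖g.1‖ * ‖x n‖ := g.1.le_opNorm _
      _ ≤ 1 * ‖x n‖ := mul_le_mul_of_nonneg_right g.2 (norm_nonneg _)
      _ = ‖x n‖ := one_mul _
  exact Real.rpow_le_rpow (abs_nonneg _) h1 (by norm_num)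

lemma le_S2 {N : ℕ} (x : Fin N → H₁) (g : StrongDual ℝ H₁) (hg : ‖g‖ ≤ 1) :
    ∑ n : Fin N, |g (x n)| ^ (2:ℝ) ≤ S2 x :=
  le_ciSup (bddAbove_S2 x) (⟨g, hg⟩ : {g : StrongDual ℝ H₁ // ‖g‖ ≤ 1})

lemma S2_nonneg {N : ℕ} (x : Fin N → H₁) : 0 ≤ S2 x := by
  have := le_S2 x 0 (by simp)
  simpa using this

lemma inner_sq_le_S2_unit {N : ℕ} (x : Fin N → H₁) (y : H₁) (hy : ‖y‖ ≤ 1) :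
    ∑ n : Fin N, (⟪y, x n⟫) ^ 2 ≤ S2 x := by
  have hg : ‖InnerProductSpace.toDual ℝ H₁ y‖ ≤ 1 := by
    rw [(InnerProductSpace.toDual ℝ H₁).norm_map]; exact hy
  have h := le_S2 x (InnerProductSpace.toDual ℝ H₁ y) hg
  refine le_trans (le_of_eq ?_) h
  refine Finset.sum_congr rfl fun n _ => ?_
  rw [rpow_two, InnerProductSpace.toDual_apply_apply, sq_abs]

lemma inner_sq_le_S2 {N : ℕ} (x : Fin N → H₁) (y : H₁) :
    ∑ n : Fin N, (⟪y, x n⟫) ^ 2 ≤ ‖y‖ ^ 2 * S2 x := by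
  rcases eq_or_ne y 0 with rfl | hy
  · simp
  · have hny : (0:ℝ) < ‖y‖ := norm_pos_iff.mpr hy
    have key := inner_sq_le_S2_unit x (‖y‖⁻¹ • y) (by
      rw [norm_smul, norm_inv, norm_norm, inv_mul_cancel₀ hny.ne'])
    have heq : ∀ n, (⟪‖y‖⁻¹ • y, x n⟫) ^ 2 = ‖y‖⁻¹ ^ 2 * (⟪y, x n⟫) ^ 2 := by
      intro n
      rw [real_inner_smul_left, mul_pow]
    rw [Finset.sum_congr rfl fun n _ => heq n, ← Finset.mul_sum] at key
    have h2 := mul_le_mul_of_nonneg_left key (le_of_lt (pow_pos hny 2))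
    rw [← mul_assoc, ← mul_pow, mul_inv_cancel₀ hny.ne', one_pow, one_mul] at h2
    exact h2

lemma S2_le_one {ι : Type*} {v : ι → H₁} (hv : Orthonormal ℝ v) {N : ℕ}
    {i : Fin N → ι} (hi : Function.Injective i) : S2 (fun n => v (i n)) ≤ 1 := by
  refine ciSup_le fun g => ?_
  set y := (InnerProductSpace.toDual ℝ H₁).symm g.1 with hy
  have hgy : ∀ z : H₁, g.1 z = ⟪y, z⟫ := by
    intro z
    rw [hy, ← InnerProductSpace.toDual_apply_apply, LinearIsometryEquiv.apply_symm_apply]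
  have hb := (hv.comp i hi).sum_inner_products_le y (s := Finset.univ)
  have hyle : ‖y‖ ≤ 1 := by
    rw [hy, LinearIsometryEquiv.norm_map]; exact g.2
  calc ∑ n : Fin N, |g.1 (v (i n))| ^ (2:ℝ)
      = ∑ n : Fin N, ‖(⟪(v ∘ i) n, y⟫)‖ ^ 2 := by
        refine Finset.sum_congr rfl fun n _ => ?_
        rw [rpow_two, hgy, Real.norm_eq_abs, Function.comp_apply, real_inner_comm, sq_abs]
    _ ≤ ‖y‖ ^ 2 := hb
    _ ≤ 1 := by nlinarith [norm_nonneg y]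

lemma parseval {E : Type*} [NormedAddCommGroup E] [InnerProductSpace ℝ E]
    {ι : Type*} (f : HilbertBasis ι ℝ E) (v : E) :
    HasSum (fun j => (⟪f j, v⟫) ^ 2) (‖v‖ ^ 2) := by
  have h := f.hasSum_inner_mul_inner v v
  rw [real_inner_self_eq_norm_sq] at h
  have hfun : (fun j => (⟪f j, v⟫) ^ 2) = fun j => ⟪v, f j⟫ * ⟪f j, v⟫ := by
    funext j; rw [sq, real_inner_comm]
  rw [hfun]; exact h

lemma adjoint_hs (u : H₁ →L[ℝ] H₂) {s : Set H₁} (e : HilbertBasis s ℝ H₁)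
    (hs : Summable fun i => ‖u (e i)‖ ^ 2) {w : Set H₂} (f : HilbertBasis w ℝ H₂) :
    Summable (fun j : w => ‖(ContinuousLinearMap.adjoint u) (f j)‖ ^ 2) ∧
      ∑' j : w, ‖(ContinuousLinearMap.adjoint u) (f j)‖ ^ 2 = ∑' i, ‖u (e i)‖ ^ 2 := by
  set A := ContinuousLinearMap.adjoint u with hA
  have hrow : ∀ i : s, HasSum (fun j : w => (⟪f j, u (e i)⟫) ^ 2) (‖u (e i)‖ ^ 2) :=
    fun i => parseval f (u (e i))
  have hcol : ∀ j : w, HasSum (fun i : s => (⟪f j, u (e i)⟫) ^ 2) (‖A (f j)‖ ^ 2) := by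
    intro j
    have h := parseval e (A (f j))
    convert h using 2 with i
    rw [real_inner_comm, hA, ContinuousLinearMap.adjoint_inner_right]
  have h1 : ∀ i : s, ∑' j : w, ENNReal.ofReal ((⟪f j, u (e i)⟫) ^ 2)
      = ENNReal.ofReal (‖u (e i)‖ ^ 2) := by
    intro i
    rw [← ENNReal.ofReal_tsum_of_nonneg (fun j => sq_nonneg _) (hrow i).summable,
      (hrow i).tsum_eq]
  have h2 : ∀ j : w, ∑' i : s, ENNReal.ofReal ((⟪f j, u (e i)⟫) ^ 2)
      = ENNReal.ofReal (‖A (f j)‖ ^ 2) := by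
    intro j
    rw [← ENNReal.ofReal_tsum_of_nonneg (fun i => sq_nonneg _) (hcol j).summable,
      (hcol j).tsum_eq]
  have hswap : ∑' j : w, ENNReal.ofReal (‖A (f j)‖ ^ 2)
      = ∑' i : s, ENNReal.ofReal (‖u (e i)‖ ^ 2) := by
    calc ∑' j : w, ENNReal.ofReal (‖A (f j)‖ ^ 2)
        = ∑' (j : w) (i : s), ENNReal.ofReal ((⟪f j, u (e i)⟫) ^ 2) := (tsum_congr h2).symm
      _ = ∑' (i : s) (j : w), ENNReal.ofReal ((⟪f j, u (e i)⟫) ^ 2) := ENNReal.tsum_comm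
      _ = ∑' i : s, ENNReal.ofReal (‖u (e i)‖ ^ 2) := tsum_congr h1
  have hfin : ∑' i : s, ENNReal.ofReal (‖u (e i)‖ ^ 2) ≠ ⊤ := by
    rw [← ENNReal.ofReal_tsum_of_nonneg (fun i => sq_nonneg _) hs]
    exact ENNReal.ofReal_ne_top
  have hsummA : Summable (fun j : w => ‖A (f j)‖ ^ 2) := by
    have := ENNReal.summable_toReal (hswap ▸ hfin)
    simpa [ENNReal.toReal_ofReal (sq_nonneg _)] using this
  refine ⟨hsummA, ?_⟩
  have heq := hswap
  rw [← ENNReal.ofReal_tsum_of_nonneg (fun j => sq_nonneg _) hsummA,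
    ← ENNReal.ofReal_tsum_of_nonneg (fun i => sq_nonneg _) hs] at heq
  exact (ENNReal.ofReal_eq_ofReal_iff (tsum_nonneg fun _ => sq_nonneg _)
    (tsum_nonneg fun _ => sq_nonneg _)).mp heq

lemma key (u : H₁ →L[ℝ] H₂) {s : Set H₁} (e : HilbertBasis s ℝ H₁)
    (hs : Summable fun i => ‖u (e i)‖ ^ 2) {N : ℕ} (x : Fin N → H₁) :
    ∑ n : Fin N, ‖u (x n)‖ ^ 2 ≤ (∑' i, ‖u (e i)‖ ^ 2) * S2 x := by
  obtain ⟨w, f, -⟩ := exists_hilbertBasis ℝ H₂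
  set A := ContinuousLinearMap.adjoint u with hA
  obtain ⟨hAs, hAt⟩ := adjoint_hs u e hs f
  have hterm : ∀ j : w, ∑ n : Fin N, (⟪f j, u (x n)⟫) ^ 2 ≤ ‖A (f j)‖ ^ 2 * S2 x := by
    intro j
    have hadj : ∀ n, (⟪f j, u (x n)⟫) = ⟪A (f j), x n⟫ := fun n =>
      (ContinuousLinearMap.adjoint_inner_left u (x n) (f j)).symm
    rw [Finset.sum_congr rfl (fun n _ => by rw [hadj n])]
    exact inner_sq_le_S2 x (A (f j))
  have hsum_each : ∀ n : Fin N, HasSum (fun j : w => (⟪f j, u (x n)⟫) ^ 2) (‖u (x n)‖ ^ 2) :=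
    fun n => parseval f (u (x n))
  have hL : Summable (fun j : w => ∑ n : Fin N, (⟪f j, u (x n)⟫) ^ 2) :=
    summable_sum fun n _ => (hsum_each n).summable
  have h1 : ∑ n : Fin N, ‖u (x n)‖ ^ 2 = ∑' j : w, ∑ n : Fin N, (⟪f j, u (x n)⟫) ^ 2 := by
    rw [Summable.tsum_finsetSum (fun n _ => (hsum_each n).summable)]
    exact Finset.sum_congr rfl fun n _ => ((hsum_each n).tsum_eq).symm
  calc ∑ n : Fin N, ‖u (x n)‖ ^ 2
      = ∑' j : w, ∑ n : Fin N, (⟪f j, u (x n)⟫) ^ 2 := h1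
    _ ≤ ∑' j : w, ‖A (f j)‖ ^ 2 * S2 x := Summable.tsum_le_tsum hterm hL (hAs.mul_right _)
    _ = (∑' j : w, ‖A (f j)‖ ^ 2) * S2 x := tsum_mul_right
    _ = (∑' i, ‖u (e i)‖ ^ 2) * S2 x := by rw [hAt]

lemma finset_bound (u : H₁ →L[ℝ] H₂) {s : Set H₁} (e : HilbertBasis s ℝ H₁) {c : ℝ}
    (hc : c ∈ summingSet 2 u) (t : Finset s) : ∑ i ∈ t, ‖u (e i)‖ ^ 2 ≤ c ^ 2 := by
  classical
  obtain ⟨hc0, hcb⟩ := hc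
  set σ : Fin t.card ≃ t := t.equivFin.symm with hσ
  set i : Fin t.card → s := fun n => (σ n : s) with hi
  have hinj : Function.Injective i := fun a b hab => σ.injective (Subtype.val_injective hab)
  set x : Fin t.card → H₁ := fun n => e (i n) with hx
  have hmain : ∑ n : Fin t.card, ‖u (x n)‖ ^ (2:ℝ) ≤ c ^ (2:ℝ) * S2 x := hcb t.card x
  have hS : S2 x ≤ 1 := S2_le_one e.orthonormal hinj
  have h2 : ∑ n : Fin t.card, ‖u (x n)‖ ^ 2 ≤ c ^ 2 := by
    have := hmain.trans (mul_le_of_le_one_right (Real.rpow_nonneg hc0 2) hS)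
    simpa [rpow_two] using this
  calc ∑ j ∈ t, ‖u (e j)‖ ^ 2 = ∑ j : t, ‖u (e (j : s))‖ ^ 2 :=
        (Finset.sum_coe_sort t fun j => ‖u (e j)‖ ^ 2).symm
    _ = ∑ n : Fin t.card, ‖u (x n)‖ ^ 2 :=
        (Equiv.sum_comp σ fun j : t => ‖u (e (j : s))‖ ^ 2).symm
    _ ≤ c ^ 2 := h2

lemma sqrt_mem (u : H₁ →L[ℝ] H₂) {s : Set H₁} (e : HilbertBasis s ℝ H₁)
    (hsum : Summable fun i => ‖u (e i)‖ ^ 2) :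
    Real.sqrt (∑' i, ‖u (e i)‖ ^ 2) ∈ summingSet 2 u := by
  refine ⟨Real.sqrt_nonneg _, fun N x => ?_⟩
  have hT : (0:ℝ) ≤ ∑' i, ‖u (e i)‖ ^ 2 := tsum_nonneg fun _ => sq_nonneg _
  show ∑ n : Fin N, ‖u (x n)‖ ^ (2:ℝ) ≤ Real.sqrt (∑' i, ‖u (e i)‖ ^ 2) ^ (2:ℝ) * S2 x
  have h2 : Real.sqrt (∑' i, ‖u (e i)‖ ^ 2) ^ (2:ℝ) = ∑' i, ‖u (e i)‖ ^ 2 := by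
    rw [rpow_two, Real.sq_sqrt hT]
  rw [h2]
  calc ∑ n : Fin N, ‖u (x n)‖ ^ (2:ℝ) = ∑ n : Fin N, ‖u (x n)‖ ^ 2 := by
        simp [rpow_two]
    _ ≤ _ := key u e hsum x

end TwoSumAux

end Aux

/-- Between Hilbert spaces, `2`-summing operators coincide with Hilbert-Schmidt operators, and
`π₂(u)` equals the Hilbert-Schmidt norm of `u`. -/
theorem two_summing_iff_hilbert_schmidt
    {H₁ H₂ : Type*} [NormedAddCommGroup H₁] [InnerProductSpace ℝ H₁] [CompleteSpace H₁]
    [NormedAddCommGroup H₂] [InnerProductSpace ℝ H₂] [CompleteSpace H₂]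
    (u : H₁ →L[ℝ] H₂) :
    (IsPSumming 2 u ↔
      ∃ (s : Set H₁) (e : HilbertBasis s ℝ H₁), Summable fun i => ‖u (e i)‖ ^ 2) ∧
    ∀ (s : Set H₁) (e : HilbertBasis s ℝ H₁), (Summable fun i => ‖u (e i)‖ ^ 2) →
      piNorm 2 u = Real.sqrt (∑' i, ‖u (e i)‖ ^ 2) := by
  constructor
  · constructor
    · rintro ⟨c, hc⟩
      obtain ⟨s, e, -⟩ := exists_hilbertBasis ℝ H₁
      refine ⟨s, e, summable_of_sum_le (c := c ^ 2) (fun i => sq_nonneg _) ?_⟩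
      intro t
      exact TwoSumAux.finset_bound u e hc t
    · rintro ⟨s, e, hsum⟩
      exact ⟨_, TwoSumAux.sqrt_mem u e hsum⟩
  · intro s e hsum
    refine le_antisymm (csInf_le ⟨0, fun c hc => hc.1⟩ (TwoSumAux.sqrt_mem u e hsum)) ?_
    refine le_csInf ⟨_, TwoSumAux.sqrt_mem u e hsum⟩ fun c hc => ?_
    have hT : ∑' i, ‖u (e i)‖ ^ 2 ≤ c ^ 2 :=
      Summable.tsum_le_of_sum_le hsum fun t => TwoSumAux.finset_bound u e hc t
    calc Real.sqrt (∑' i, ‖u (e i)‖ ^ 2) ≤ Real.sqrt (c ^ 2) := Real.sqrt_le_sqrt hT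
      _ = c := Real.sqrt_sq hc.1
end

section
/- Let F be a Banach space of cotype 2 and E any Banach space. Then every γ-summing operator u : E → F is 2-summing, with π₂(u) ≤ C₂(F) · ‖u‖_{R^∞(E;F)}, where C₂(F) is the Rademacher cotype-2 constant of F. -/
open scoped BigOperators

open MeasureTheory

/-- Admissible Rademacher-summing constants of `u`. -/
def radSummingSet {Ω : Type*} [MeasurableSpace Ω] (μ : Measure Ω) (r : ℕ → Ω → ℝ)
    {E F : Type*} [NormedAddCommGroup E] [NormedSpace ℝ E]
    [NormedAddCommGroup F] [NormedSpace ℝ F] (u : E →L[ℝ] F) : Set ℝ :=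
  {C | 0 ≤ C ∧ ∀ (N : ℕ) (x : Fin N → E),
    Real.sqrt (∫ ω, ‖∑ n : Fin N, r n ω • u (x n)‖ ^ 2 ∂μ) ≤
      C * ⨆ g : {g : StrongDual ℝ E // ‖g‖ ≤ 1},
            Real.sqrt (∑ n : Fin N, (g.1 (x n)) ^ 2)}

/-- Admissible γ-summing constants of `u` (relative to Gaussian variables `γ`). -/
def gammaSummingSet {Ω : Type*} [MeasurableSpace Ω] (μ : Measure Ω) (γ : ℕ → Ω → ℝ)
    {E F : Type*} [NormedAddCommGroup E] [NormedSpace ℝ E]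
    [NormedAddCommGroup F] [NormedSpace ℝ F] (u : E →L[ℝ] F) : Set ℝ :=
  {C | 0 ≤ C ∧ ∀ (N : ℕ) (x : Fin N → E),
    Real.sqrt (∫ ω, ‖∑ n : Fin N, γ n ω • u (x n)‖ ^ 2 ∂μ) ≤
      C * ⨆ g : {g : StrongDual ℝ E // ‖g‖ ≤ 1},
            Real.sqrt (∑ n : Fin N, (g.1 (x n)) ^ 2)}

/-- Admissible Rademacher cotype-2 constants of `F`. -/
def cotype2Set {Ω : Type*} [MeasurableSpace Ω] (μ : Measure Ω) (r : ℕ → Ω → ℝ)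
    (F : Type*) [NormedAddCommGroup F] [NormedSpace ℝ F] : Set ℝ :=
  {c | 0 ≤ c ∧ ∀ (N : ℕ) (y : Fin N → F),
    Real.sqrt (∑ n : Fin N, ‖y n‖ ^ 2) ≤
      c * Real.sqrt (∫ ω, ‖∑ n : Fin N, r n ω • y n‖ ^ 2 ∂μ)}

/-- Hypotheses making `r` independent Rademacher variables. -/
structure IsRademacherSequence {Ω : Type*} [MeasurableSpace Ω] (μ : Measure Ω)
    (r : ℕ → Ω → ℝ) : Prop where
  meas : ∀ n, Measurable (r n)
  indep : ProbabilityTheory.iIndepFun r μ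
  dist : ∀ n, μ (r n ⁻¹' {1}) = 1/2 ∧ μ (r n ⁻¹' {-1}) = 1/2

/-- Hypotheses making `γ` independent standard Gaussian variables. -/
structure IsGaussianSequence {Ω : Type*} [MeasurableSpace Ω] (μ : Measure Ω)
    (γ : ℕ → Ω → ℝ) : Prop where
  meas : ∀ n, Measurable (γ n)
  indep : ProbabilityTheory.iIndepFun γ μ
  gaussian : ∀ n, Measure.map (γ n) μ = ProbabilityTheory.gaussianReal 0 1


section GammaSummingAux

open MeasureTheory ProbabilityTheory Real Set
open scoped NNReal ENNReal

noncomputable abbrev Gm : Measure ℝ := gaussianReal 0 1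

lemma g_pdf_eq (x : ℝ) : gaussianPDFReal 0 1 x = (√(2 * π))⁻¹ * rexp (-(1/2) * x ^ 2) := by
  simp only [gaussianPDFReal, NNReal.coe_one, mul_one, sub_zero]
  ring_nf

lemma g_integrable_of_bound (f : ℝ → ℝ) (hf : Measurable f) {s : ℝ} (hs : -1 < s)
    (hb : ∀ x, |f x| ≤ |x ^ s|) : Integrable f Gm := by
  rw [Gm, gaussianReal_of_var_ne_zero 0 one_ne_zero]
  rw [integrable_withDensity_iff (measurable_gaussianPDF 0 1)
    (Filter.Eventually.of_forall fun x => ENNReal.ofReal_lt_top)]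
  have h := (integrable_rpow_mul_exp_neg_mul_sq (b := 1/2) (by norm_num) hs).abs
  apply (h.const_mul ((√(2 * π))⁻¹)).mono'
  · exact ((hf.mul (measurable_gaussianPDF 0 1).ennreal_toReal)).aestronglyMeasurable
  · filter_upwards with x
    simp only [gaussianPDF, g_pdf_eq, Real.norm_eq_abs]
    rw [ENNReal.toReal_ofReal (by positivity), abs_mul,
      abs_of_nonneg (by positivity : (0:ℝ) ≤ (√(2 * π))⁻¹ * rexp (-(1/2) * x ^ 2)), abs_mul,
      abs_of_nonneg (Real.exp_pos _).le]
    calc |f x| * ((√(2 * π))⁻¹ * rexp (-(1/2) * x ^ 2))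
        ≤ |x ^ s| * ((√(2 * π))⁻¹ * rexp (-(1/2) * x ^ 2)) :=
          mul_le_mul_of_nonneg_right (hb x) (by positivity)
      _ = (√(2 * π))⁻¹ * (|x ^ s| * rexp (-(1/2) * x ^ 2)) := by ring

lemma g_int_abs : Integrable (fun x => |x|) Gm := by
  apply g_integrable_of_bound (fun x => |x|) measurable_abs (s := 1) (by norm_num)
  intro x; rw [Real.rpow_one, abs_abs]

lemma g_int_sq : Integrable (fun x => x ^ 2) Gm := by
  apply g_integrable_of_bound (fun x => x ^ 2) (measurable_id.pow_const 2) (s := 2) (by norm_num)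
  intro x
  rw [show (2:ℝ) = ((2:ℕ):ℝ) by norm_num, Real.rpow_natCast]

lemma g_zero : Gm {0} = 0 :=
  (gaussianReal_absolutelyContinuous 0 one_ne_zero) (by simp)

lemma g_m_pos : 0 < ∫ x, |x| ∂Gm := by
  rcases lt_or_eq_of_le (integral_nonneg (fun x => abs_nonneg x) (μ := Gm) (f := abs)) with h | h
  · exact h
  exfalso
  have h0 := (integral_eq_zero_iff_of_nonneg (fun x => abs_nonneg x) g_int_abs).mp h.symm
  have hc : Gm {(0:ℝ)}ᶜ = 0 := by
    have h1 : ∀ᵐ x ∂Gm, x = 0 := by filter_upwards [h0] with x hx; simpa [abs_eq_zero] using hx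
    simpa [ae_iff, compl_def] using h1
  have huniv : (1:ℝ≥0∞) = Gm univ := measure_univ.symm
  rw [← Set.union_compl_self ({0} : Set ℝ)] at huniv
  have := measure_union_le (μ := Gm) ({0} : Set ℝ) ({0} : Set ℝ)ᶜ
  rw [g_zero, hc] at this
  simp only [← huniv, add_zero, nonpos_iff_eq_zero] at this
  exact one_ne_zero this

lemma g_symm : Measure.map Neg.neg Gm = Gm := by
  have h := gaussianReal_map_const_mul (μ := 0) (v := 1) (-1)
  have h1 : ((-1:ℝ) * ·) = (Neg.neg : ℝ → ℝ) := funext fun x => neg_one_mul x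
  have h2 : (⟨(-1:ℝ)^2, sq_nonneg _⟩ : ℝ≥0) * 1 = 1 := by ext; norm_num
  rw [h1] at h
  show Measure.map Neg.neg (gaussianReal 0 1) = gaussianReal 0 1
  rw [h]
  congr 1
  · simp

lemma g_abs_apply {s : Set ℝ} (hs : MeasurableSet s) :
    Gm {b : ℝ | |b| ∈ s} = 2 * Gm (s ∩ Ioi 0) := by
  set A : Set ℝ := s ∩ Ioi 0 with hA
  have hAm : MeasurableSet A := hs.inter measurableSet_Ioi
  have hBm : MeasurableSet (Neg.neg ⁻¹' A : Set ℝ) := hAm.preimage measurable_neg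
  have hB : Gm (Neg.neg ⁻¹' A) = Gm A := by
    rw [← Measure.map_apply measurable_neg hAm, g_symm]
  have hsub : {b : ℝ | |b| ∈ s} ⊆ A ∪ Neg.neg ⁻¹' A ∪ {0} := by
    intro b hb
    rcases lt_trichotomy b 0 with h | h | h
    · left; right
      simp only [mem_preimage, hA, mem_inter_iff, mem_Ioi]
      constructor
      · simpa [abs_of_neg h] using hb
      · linarith
    · right; simp [h]
    · left; left
      exact ⟨by simpa [abs_of_pos h] using hb, h⟩
  have hsup : A ∪ Neg.neg ⁻¹' A ⊆ {b : ℝ | |b| ∈ s} := by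
    rintro b (hb | hb)
    · rcases hb with ⟨h1, h2⟩
      simpa [abs_of_pos (mem_Ioi.mp h2)] using h1
    · rcases hb with ⟨h1, h2⟩
      simp only [mem_Ioi] at h2
      simpa [abs_of_neg (by linarith : b < 0)] using h1
  have hdisj : Disjoint A (Neg.neg ⁻¹' A) := by
    apply Set.disjoint_left.mpr
    rintro b ⟨_, h1⟩ ⟨_, h2⟩
    simp only [mem_preimage, mem_Ioi] at h1 h2
    linarith
  have hle : Gm {b : ℝ | |b| ∈ s} ≤ 2 * Gm A := by
    calc Gm {b : ℝ | |b| ∈ s} ≤ Gm (A ∪ Neg.neg ⁻¹' A ∪ {0}) := measure_mono hsub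
      _ ≤ Gm (A ∪ Neg.neg ⁻¹' A) + Gm {0} := measure_union_le _ _
      _ = Gm (A ∪ Neg.neg ⁻¹' A) := by rw [g_zero, add_zero]
      _ ≤ Gm A + Gm (Neg.neg ⁻¹' A) := measure_union_le _ _
      _ = 2 * Gm A := by rw [hB, two_mul]
  have hge : 2 * Gm A ≤ Gm {b : ℝ | |b| ∈ s} := by
    calc 2 * Gm A = Gm A + Gm (Neg.neg ⁻¹' A) := by rw [hB, two_mul]
      _ = Gm (A ∪ Neg.neg ⁻¹' A) := (measure_union hdisj hBm).symm
      _ ≤ Gm {b : ℝ | |b| ∈ s} := measure_mono hsup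
  exact le_antisymm hle hge

lemma g_mix {s : Set ℝ} (hs : MeasurableSet s) :
    2⁻¹ * Gm {b : ℝ | |b| ∈ s} + 2⁻¹ * Gm {b : ℝ | -|b| ∈ s} = Gm s := by
  have h1 : Gm {b : ℝ | |b| ∈ s} = 2 * Gm (s ∩ Ioi 0) := g_abs_apply hs
  have h2 : Gm {b : ℝ | -|b| ∈ s} = 2 * Gm (s ∩ Iio 0) := by
    have : {b : ℝ | -|b| ∈ s} = {b : ℝ | |b| ∈ Neg.neg ⁻¹' s} := by
      ext b; simp only [mem_setOf_eq, mem_preimage]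
    rw [this, g_abs_apply (hs.preimage measurable_neg)]
    congr 1
    have hset : (Neg.neg ⁻¹' s : Set ℝ) ∩ Ioi 0 = Neg.neg ⁻¹' (s ∩ Iio 0) := by
      ext b
      simp only [mem_inter_iff, mem_preimage, mem_Ioi, mem_Iio]
      constructor
      · rintro ⟨h1, h2⟩; exact ⟨h1, by linarith⟩
      · rintro ⟨h1, h2⟩; exact ⟨h1, by linarith⟩
    rw [hset, ← Measure.map_apply measurable_neg (hs.inter measurableSet_Iio), g_symm]
  rw [h1, h2, ← mul_assoc, ← mul_assoc, ENNReal.inv_mul_cancel two_ne_zero ENNReal.ofNat_ne_top,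
    one_mul, one_mul]
  have hu : s ∩ Ioi 0 ∪ s ∩ Iio 0 = s \ {0} := by
    rw [← Set.inter_union_distrib_left]
    have : Ioi (0:ℝ) ∪ Iio 0 = {(0:ℝ)}ᶜ := by
      rw [Set.union_comm, Set.Iio_union_Ioi]
    rw [this, Set.diff_eq, Set.inter_comm]
  have hd : Disjoint (s ∩ Ioi (0:ℝ)) (s ∩ Iio 0) := by
    apply Set.disjoint_left.mpr
    rintro b ⟨_, h1⟩ ⟨_, h2⟩
    simp only [mem_Ioi] at h1; simp only [mem_Iio] at h2; linarith
  rw [← measure_union hd (hs.inter measurableSet_Iio), hu,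
    measure_diff_null (by exact g_zero)]

section rad
variable {Ω₁ : Type*} [MeasurableSpace Ω₁] (μ₁ : Measure Ω₁) [IsProbabilityMeasure μ₁]
  (ρ : Ω₁ → ℝ) (hm : Measurable ρ) (h1 : μ₁ (ρ ⁻¹' {1}) = 1/2) (h2 : μ₁ (ρ ⁻¹' {-1}) = 1/2)

include hm h1 h2

lemma rad_law : Measure.map ρ μ₁ = (2:ℝ≥0∞)⁻¹ • Measure.dirac (1:ℝ) + (2:ℝ≥0∞)⁻¹ • Measure.dirac (-1:ℝ) := by
  have hdisj : Disjoint (ρ ⁻¹' {1}) (ρ ⁻¹' {-1}) := by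
    apply Set.disjoint_left.mpr
    intro ω hω1 hω2
    simp only [mem_preimage, mem_singleton_iff] at hω1 hω2
    rw [hω1] at hω2; norm_num at hω2
  have hUV : μ₁ (ρ ⁻¹' {1} ∪ ρ ⁻¹' {-1}) = 1 := by
    rw [measure_union hdisj (hm (measurableSet_singleton _)), h1, h2, ENNReal.add_halves]
  have hW : μ₁ (ρ ⁻¹' {1} ∪ ρ ⁻¹' {-1})ᶜ = 0 := by
    rw [measure_compl ((hm (measurableSet_singleton _)).union
      (hm (measurableSet_singleton _))) (measure_ne_top _ _), hUV, measure_univ, tsub_self]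
  ext s hs
  rw [Measure.map_apply hm hs]
  have key : μ₁ (ρ ⁻¹' s) = μ₁ (ρ ⁻¹' s ∩ ρ ⁻¹' {1}) + μ₁ (ρ ⁻¹' s ∩ ρ ⁻¹' {-1}) := by
    rw [← measure_inter_conull hW, Set.inter_union_distrib_left,
      measure_union (hdisj.mono inter_subset_right inter_subset_right)
        ((hm hs).inter (hm (measurableSet_singleton _)))]
  have e1 : ρ ⁻¹' s ∩ ρ ⁻¹' {1} = ρ ⁻¹' (s ∩ {1}) := by rw [Set.preimage_inter]
  have e2 : ρ ⁻¹' s ∩ ρ ⁻¹' {-1} = ρ ⁻¹' (s ∩ {-1}) := by rw [Set.preimage_inter]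
  rw [key, e1, e2]
  simp only [Measure.coe_add, Measure.coe_smul, Pi.add_apply, Pi.smul_apply, smul_eq_mul,
    Measure.dirac_apply' _ hs]
  by_cases hs1 : (1:ℝ) ∈ s
  · by_cases hs2 : (-1:ℝ) ∈ s
    · rw [Set.inter_eq_right.mpr (singleton_subset_iff.mpr hs1),
        Set.inter_eq_right.mpr (singleton_subset_iff.mpr hs2), h1, h2]
      simp [indicator_apply, hs1, hs2, ENNReal.div_eq_inv_mul, one_div]
    · rw [Set.inter_eq_right.mpr (singleton_subset_iff.mpr hs1),
        Set.inter_singleton_eq_empty.mpr hs2, h1]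
      simp [indicator_apply, hs1, hs2, ENNReal.div_eq_inv_mul, one_div]
  · by_cases hs2 : (-1:ℝ) ∈ s
    · rw [Set.inter_eq_right.mpr (singleton_subset_iff.mpr hs2),
        Set.inter_singleton_eq_empty.mpr hs1, h2]
      simp [indicator_apply, hs1, hs2, ENNReal.div_eq_inv_mul, one_div]
    · rw [Set.inter_singleton_eq_empty.mpr hs1, Set.inter_singleton_eq_empty.mpr hs2]
      simp [indicator_apply, hs1, hs2]

lemma key1 : Measure.map (fun p : ℝ × ℝ => p.1 * |p.2|) ((Measure.map ρ μ₁).prod Gm) = Gm := by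
  have hmeas : Measurable (fun p : ℝ × ℝ => p.1 * |p.2|) :=
    measurable_fst.mul measurable_snd.abs
  ext s hs
  rw [Measure.map_apply hmeas hs, Measure.prod_apply (hmeas hs)]
  have hslice : ∀ a : ℝ, (Prod.mk a ⁻¹' ((fun p : ℝ × ℝ => p.1 * |p.2|) ⁻¹' s))
      = {b : ℝ | a * |b| ∈ s} := fun a => rfl
  rw [rad_law μ₁ ρ hm h1 h2]
  rw [lintegral_add_measure, lintegral_smul_measure, lintegral_smul_measure]
  have hf : Measurable (fun a : ℝ => Gm (Prod.mk a ⁻¹' ((fun p : ℝ × ℝ => p.1 * |p.2|) ⁻¹' s))) :=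
    measurable_measure_prodMk_left (hmeas hs)
  rw [lintegral_dirac' _ hf, lintegral_dirac' _ hf]
  simp only [hslice, one_mul, neg_one_mul]
  have hneg : {b : ℝ | -|b| ∈ s} = {b : ℝ | -|b| ∈ s} := rfl
  exact g_mix hs

end rad

lemma tuple_law {Ω : Type*} [MeasurableSpace Ω] (μ : Measure Ω) [IsProbabilityMeasure μ]
    {X : ℕ → Ω → ℝ} (hm : ∀ n, Measurable (X n))
    (h : iIndepFun X μ) (N : ℕ) :
    Measure.map (fun ω (n : Fin N) => X n ω) μ
      = Measure.pi (fun n : Fin N => Measure.map (X (n : ℕ)) μ) := by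
  refine (Measure.pi_eq fun s hs => ?_).symm
  have hmt : Measurable (fun ω (n : Fin N) => X n ω) :=
    measurable_pi_lambda _ fun n => hm n
  rw [Measure.map_apply hmt (MeasurableSet.univ_pi hs)]
  have hpre : (fun ω (n : Fin N) => X n ω) ⁻¹' Set.pi univ s
      = ⋂ i ∈ Finset.range N, X i ⁻¹' (fun i =>
          if hi : i < N then s ⟨i, hi⟩ else univ) i := by
    ext ω
    simp only [mem_preimage, Set.mem_pi, mem_univ, forall_true_left, Set.mem_iInter,
      Finset.mem_range]
    constructor
    · intro hω i hi
      simp only [dif_pos hi]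
      exact hω ⟨i, hi⟩
    · intro hω n
      have := hω n.1 n.2
      simpa [dif_pos n.2] using this
  rw [hpre, h.measure_inter_preimage_eq_mul (Finset.range N)
    (sets := fun i => if hi : i < N then s ⟨i, hi⟩ else univ) ?_]
  · rw [← Fin.prod_univ_eq_prod_range
      (fun i => μ (X i ⁻¹' (if hi : i < N then s ⟨i, hi⟩ else univ))) N]
    apply Finset.prod_congr rfl
    intro n _
    rw [Measure.map_apply (hm _) (hs n)]
    congr 1
    simp [dif_pos n.2]
  · intro i _
    by_cases hi : i < N
    · simpa [dif_pos hi] using hs ⟨i, hi⟩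
    · simp [dif_neg hi]

lemma map_pi_map {N : ℕ} {α β : Type*} [MeasurableSpace α] [MeasurableSpace β]
    (κ : Fin N → Measure α) [∀ n, IsProbabilityMeasure (κ n)]
    {h : α → β} (hh : Measurable h) :
    Measure.map (fun q (n : Fin N) => h (q n)) (Measure.pi κ)
      = Measure.pi (fun n => Measure.map h (κ n)) := by
  refine (Measure.pi_eq fun s hs => ?_).symm
  have hmt : Measurable (fun (q : Fin N → α) (n : Fin N) => h (q n)) :=
    measurable_pi_lambda _ fun n => hh.comp (measurable_pi_apply n)
  rw [Measure.map_apply hmt (MeasurableSet.univ_pi hs)]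
  have hpre : (fun (q : Fin N → α) (n : Fin N) => h (q n)) ⁻¹' Set.pi univ s
      = Set.pi univ (fun n => h ⁻¹' s n) := by
    ext q; simp [Set.mem_pi]
  rw [hpre, Measure.pi_pi]
  exact Finset.prod_congr rfl fun n _ => (Measure.map_apply hh (hs n)).symm

lemma sq_int {α : Type*} [MeasurableSpace α] (μ : Measure α) [IsProbabilityMeasure μ] {g : α → ℝ}
    (h1 : Integrable g μ) (h2 : Integrable (fun a => g a ^ 2) μ) :
    (∫ a, g a ∂μ) ^ 2 ≤ ∫ a, g a ^ 2 ∂μ := by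
  set c := ∫ a, g a ∂μ with hc
  have h3 : 0 ≤ ∫ a, (g a - c) ^ 2 ∂μ := integral_nonneg fun a => sq_nonneg _
  have he : (fun a => (g a - c) ^ 2) = fun a => g a ^ 2 - (2 * c) * g a + c ^ 2 :=
    funext fun a => by ring
  have ha : Integrable (fun a => g a ^ 2 - 2 * c * g a) μ := h2.sub (h1.const_mul (2 * c))
  have hb : Integrable (fun _ : α => c ^ 2) μ := integrable_const _
  have e1 : ∫ a, (g a ^ 2 - 2 * c * g a) + c ^ 2 ∂μ
      = (∫ a, g a ^ 2 - 2 * c * g a ∂μ) + ∫ _, c ^ 2 ∂μ := integral_add ha hb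
  have e2 : ∫ a, g a ^ 2 - 2 * c * g a ∂μ = (∫ a, g a ^ 2 ∂μ) - 2 * c * c := by
    rw [integral_sub h2 (h1.const_mul (2 * c)), integral_const_mul, ← hc]
  have e3 : ∫ _, c ^ 2 ∂μ = c ^ 2 := by
    rw [integral_const, probReal_univ, one_smul]
  rw [he] at h3
  rw [e1, e2, e3] at h3
  nlinarith [h3]

section master

variable {Ω₁ Ω₂ : Type*} [MeasurableSpace Ω₁] [MeasurableSpace Ω₂]
  (μ₁ : Measure Ω₁) [IsProbabilityMeasure μ₁] (μ₂ : Measure Ω₂) [IsProbabilityMeasure μ₂]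
  (r : ℕ → Ω₁ → ℝ) (γ : ℕ → Ω₂ → ℝ)
  (hrm : ∀ n, Measurable (r n)) (hri : iIndepFun r μ₁)
  (hrd : ∀ n, μ₁ (r n ⁻¹' {1}) = 1/2 ∧ μ₁ (r n ⁻¹' {-1}) = 1/2)
  (hgm : ∀ n, Measurable (γ n)) (hgi : iIndepFun γ μ₂)
  (hgg : ∀ n, Measure.map (γ n) μ₂ = gaussianReal 0 1)

include hrm hri hrd hgm hgi hgg

lemma master {F : Type*} [NormedAddCommGroup F] [NormedSpace ℝ F] [CompleteSpace F] (N : ℕ) (y : Fin N → F) :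
    (∫ x, |x| ∂Gm) ^ 2 * ∫ ω₁, ‖∑ n : Fin N, r n ω₁ • y n‖ ^ 2 ∂μ₁
      ≤ ∫ ω₂, ‖∑ n : Fin N, γ n ω₂ • y n‖ ^ 2 ∂μ₂ := by
  set m := ∫ x, |x| ∂Gm with hm
  set Φ : (Fin N → ℝ) → ℝ := fun t => ‖∑ n : Fin N, t n • y n‖ ^ 2 with hΦ
  have hΦc : Continuous Φ := by
    apply Continuous.pow
    exact (continuous_finset_sum _ fun n _ => (continuous_apply n).smul continuous_const).norm
  have hΦnn : ∀ t, 0 ≤ Φ t := fun t => sq_nonneg _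
  set R : Ω₁ → (Fin N → ℝ) := fun ω₁ n => r n ω₁ with hR
  set T : Ω₂ → (Fin N → ℝ) := fun ω₂ n => γ n ω₂ with hT
  have hRm : Measurable R := measurable_pi_lambda _ fun n => hrm n
  have hTm : Measurable T := measurable_pi_lambda _ fun n => hgm n
  set mix : (Fin N → ℝ) × (Fin N → ℝ) → (Fin N → ℝ) := fun p n => p.1 n * |p.2 n| with hmix
  have hmixm : Measurable mix := measurable_pi_lambda _ fun n =>
    ((measurable_pi_apply n).comp measurable_fst).mul
      (((measurable_pi_apply n).comp measurable_snd).abs)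
  -- laws
  have hLG : Measure.map T μ₂ = Measure.pi (fun _ : Fin N => Gm) := by
    rw [tuple_law μ₂ hgm hgi N]
    exact congrArg Measure.pi (funext fun n => hgg n)
  have hLr : Measure.map R μ₁ = Measure.pi (fun n : Fin N => Measure.map (r (n : ℕ)) μ₁) :=
    tuple_law μ₁ hrm hri N
  haveI : ∀ n : Fin N, IsProbabilityMeasure (Measure.map (r (n : ℕ)) μ₁) :=
    fun n => Measure.isProbabilityMeasure_map (hrm n).aemeasurable
  set P : Measure ((Fin N → ℝ) × (Fin N → ℝ)) :=
    (Measure.pi fun n : Fin N => Measure.map (r (n : ℕ)) μ₁).prod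
      (Measure.pi fun _ : Fin N => Gm) with hP
  have hkey3 : Measure.map mix P = Measure.pi (fun _ : Fin N => Gm) := by
    have hequiv := (measurePreserving_arrowProdEquivProdArrow ℝ ℝ (Fin N)
      (fun n : Fin N => Measure.map (r (n : ℕ)) μ₁) (fun _ => Gm)).map_eq
    rw [hP, ← hequiv, Measure.map_map hmixm
      (MeasurableEquiv.arrowProdEquivProdArrow ℝ ℝ (Fin N)).measurable]
    have hcomp : mix ∘ (MeasurableEquiv.arrowProdEquivProdArrow ℝ ℝ (Fin N))
        = fun q (n : Fin N) => (fun ab : ℝ × ℝ => ab.1 * |ab.2|) (q n) := by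
      funext q
      simp [hmix, MeasurableEquiv.arrowProdEquivProdArrow, Equiv.arrowProdEquivProdArrow]
    rw [hcomp, map_pi_map _ (h := fun ab : ℝ × ℝ => ab.1 * |ab.2|) (measurable_fst.mul measurable_snd.abs)]
    congr 1
    funext n
    exact key1 μ₁ (r n) (hrm n) (hrd n).1 (hrd n).2
  -- integrability on Ω₂
  have hsq : ∀ n : ℕ, Integrable (fun ω₂ => γ n ω₂ ^ 2) μ₂ := by
    intro n
    have h := g_int_sq
    rw [Gm, ← hgg n] at h
    exact (integrable_map_measure
      (measurable_id.pow_const 2).aestronglyMeasurable (hgm n).aemeasurable).mp h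
  have habs : ∀ n : ℕ, Integrable (fun ω₂ => |γ n ω₂|) μ₂ := by
    intro n
    have h := g_int_abs
    rw [Gm, ← hgg n] at h
    exact (integrable_map_measure
      measurable_abs.aestronglyMeasurable (hgm n).aemeasurable).mp h
  have hIabs : ∀ n : ℕ, ∫ ω₂, |γ n ω₂| ∂μ₂ = m := by
    intro n
    rw [hm, Gm, ← hgg n, integral_map (hgm n).aemeasurable measurable_abs.aestronglyMeasurable]
  have hprodint : ∀ n k : ℕ, Integrable (fun ω₂ => |γ n ω₂| * |γ k ω₂|) μ₂ := by
    intro n k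
    apply Integrable.mono' (((hsq n).add (hsq k)).const_mul (1/2))
      ((hgm n).abs.mul (hgm k).abs).aestronglyMeasurable
    filter_upwards with ω
    rw [Real.norm_eq_abs, abs_of_nonneg (mul_nonneg (abs_nonneg _) (abs_nonneg _))]
    simp only [Pi.add_apply, Pi.mul_apply]
    nlinarith [sq_nonneg (|γ n ω| - |γ k ω|), sq_abs (γ n ω), sq_abs (γ k ω)]
  have hdom : Integrable (fun ω₂ => (∑ n : Fin N, |γ n ω₂| * ‖y n‖) ^ 2) μ₂ := by
    have he : ∀ ω, (∑ n : Fin N, |γ n ω| * ‖y n‖) ^ 2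
        = ∑ n : Fin N, ∑ k : Fin N, (|γ n ω| * |γ k ω|) * (‖y n‖ * ‖y k‖) := by
      intro ω
      rw [sq, Finset.sum_mul_sum]
      exact Finset.sum_congr rfl fun n _ => Finset.sum_congr rfl fun k _ => by ring
    simp only [he]
    exact integrable_finset_sum _ fun n _ => integrable_finset_sum _ fun k _ =>
      (hprodint n k).mul_const _
  have hbound : ∀ (ε : Fin N → ℝ), (∀ n, |ε n| ≤ 1) → ∀ ω₂,
      ‖∑ n : Fin N, (ε n * |γ n ω₂|) • y n‖ ≤ ∑ n : Fin N, |γ n ω₂| * ‖y n‖ := by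
    intro ε hε ω₂
    calc ‖∑ n : Fin N, (ε n * |γ n ω₂|) • y n‖ ≤ ∑ n : Fin N, ‖(ε n * |γ n ω₂|) • y n‖ :=
        norm_sum_le _ _
      _ ≤ ∑ n : Fin N, |γ n ω₂| * ‖y n‖ := by
        apply Finset.sum_le_sum
        intro n _
        rw [norm_smul, Real.norm_eq_abs, abs_mul, abs_abs]
        apply mul_le_mul_of_nonneg_right _ (norm_nonneg _)
        calc |ε n| * |γ n ω₂| ≤ 1 * |γ n ω₂| :=
            mul_le_mul_of_nonneg_right (hε n) (abs_nonneg _)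
          _ = |γ n ω₂| := one_mul _
  have hAint : Integrable (fun ω₂ => Φ (T ω₂)) μ₂ := by
    apply hdom.mono' ((hΦc.measurable.comp hTm)).aestronglyMeasurable
    filter_upwards with ω
    simp only [Function.comp_apply]
    rw [Real.norm_eq_abs, abs_of_nonneg (hΦnn _)]
    have h1 : ‖∑ n : Fin N, γ n ω • y n‖ ≤ ∑ n : Fin N, |γ n ω| * ‖y n‖ := by
      refine (norm_sum_le _ _).trans ?_
      apply Finset.sum_le_sum
      intro n _
      rw [norm_smul, Real.norm_eq_abs]
    calc Φ (T ω) = ‖∑ n : Fin N, γ n ω • y n‖ ^ 2 := rfl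
      _ ≤ (∑ n : Fin N, |γ n ω| * ‖y n‖) ^ 2 := pow_le_pow_left₀ (norm_nonneg _) h1 2
  -- transfer integrability through laws
  have hΦpi : Integrable Φ (Measure.pi fun _ : Fin N => Gm) := by
    rw [← hLG]
    exact (integrable_map_measure (by rw [hLG]; exact hΦc.aestronglyMeasurable)
      hTm.aemeasurable).mpr hAint
  have hΦmixP : Integrable (fun p => Φ (mix p)) P := by
    have := (integrable_map_measure (g := Φ) (f := mix) (μ := P)
      (by rw [hkey3]; exact hΦc.aestronglyMeasurable) hmixm.aemeasurable).mp
      (by rw [hkey3]; exact hΦpi)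
    exact this
  have hprodmap : Measure.map (Prod.map R T) (μ₁.prod μ₂) = P := by
    rw [← Measure.map_prod_map _ _ hRm hTm, hLr, hLG]
  have hΨint : Integrable (fun p : Ω₁ × Ω₂ => Φ (mix (R p.1, T p.2))) (μ₁.prod μ₂) := by
    have h := (integrable_map_measure (g := fun q => Φ (mix q)) (f := Prod.map R T)
      (μ := μ₁.prod μ₂) (by rw [hprodmap]; exact hΦmixP.aestronglyMeasurable)
      (hRm.prodMap hTm).aemeasurable).mp (by rw [hprodmap]; exact hΦmixP)
    exact h
  -- equality chain
  have E1 : ∫ p, Φ (mix (R p.1, T p.2)) ∂(μ₁.prod μ₂) = ∫ ω₂, Φ (T ω₂) ∂μ₂ := by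
    have e1 : ∫ p, Φ (mix (R p.1, T p.2)) ∂(μ₁.prod μ₂)
        = ∫ q, Φ (mix q) ∂(Measure.map (Prod.map R T) (μ₁.prod μ₂)) := by
      rw [integral_map (hRm.prodMap hTm).aemeasurable
        (by rw [hprodmap]; exact hΦmixP.aestronglyMeasurable)]
      rfl
    have e2 : ∫ q, Φ (mix q) ∂P = ∫ t, Φ t ∂(Measure.map mix P) := by
      rw [integral_map hmixm.aemeasurable (by rw [hkey3]; exact hΦc.aestronglyMeasurable)]
    have e3 : ∫ t, Φ t ∂(Measure.pi fun _ : Fin N => Gm) = ∫ ω₂, Φ (T ω₂) ∂μ₂ := by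
      rw [← hLG, integral_map hTm.aemeasurable (by rw [hLG]; exact hΦc.aestronglyMeasurable)]
    rw [e1, hprodmap, e2, hkey3, e3]
  have E2 : ∫ p, Φ (mix (R p.1, T p.2)) ∂(μ₁.prod μ₂)
      = ∫ ω₁, (∫ ω₂, Φ (mix (R ω₁, T ω₂)) ∂μ₂) ∂μ₁ :=
    integral_prod _ hΨint
  -- a.e. signs
  have hsign : ∀ᵐ ω₁ ∂μ₁, ∀ n : Fin N, r n ω₁ = 1 ∨ r n ω₁ = -1 := by
    rw [ae_all_iff]
    intro n
    have hdisj : Disjoint (r n ⁻¹' {1}) (r n ⁻¹' {-1}) := by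
      apply Set.disjoint_left.mpr
      intro ω hω1 hω2
      simp only [mem_preimage, mem_singleton_iff] at hω1 hω2
      rw [hω1] at hω2; norm_num at hω2
    have hUV : μ₁ (r n ⁻¹' {1} ∪ r n ⁻¹' {-1}) = 1 := by
      rw [measure_union hdisj ((hrm n) (measurableSet_singleton _)), (hrd n).1, (hrd n).2,
        ENNReal.add_halves]
    have hW : μ₁ (r n ⁻¹' {1} ∪ r n ⁻¹' {-1})ᶜ = 0 := by
      rw [measure_compl (((hrm n) (measurableSet_singleton _)).union
        ((hrm n) (measurableSet_singleton _))) (measure_ne_top _ _), hUV, measure_univ, tsub_self]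
    rw [ae_iff]
    refine measure_mono_null ?_ hW
    intro ω hω
    simp only [mem_compl_iff, mem_union, mem_preimage, mem_singleton_iff]
    push_neg at hω ⊢
    exact hω
  -- Jensen step
  have hJ : ∀ ε : Fin N → ℝ, (∀ n, ε n = 1 ∨ ε n = -1) →
      m ^ 2 * Φ ε ≤ ∫ ω₂, Φ (mix (ε, T ω₂)) ∂μ₂ := by
    intro ε hε
    have hεabs : ∀ n, |ε n| = 1 := by
      intro n; rcases hε n with h | h <;> simp [h]
    set f : Ω₂ → F := fun ω₂ => ∑ n : Fin N, (ε n * |γ n ω₂|) • y n with hf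
    have hfint : Integrable f μ₂ :=
      integrable_finset_sum _ fun n _ => (((habs n.1).const_mul (ε n)).smul_const (y n))
    have hif : ∫ ω₂, f ω₂ ∂μ₂ = m • (∑ n : Fin N, ε n • y n) := by
      rw [hf, integral_finset_sum _ fun n _ => (((habs n.1).const_mul (ε n)).smul_const (y n))]
      rw [Finset.smul_sum]
      apply Finset.sum_congr rfl
      intro n _
      rw [integral_smul_const, integral_const_mul, hIabs n, mul_comm, mul_smul]
    have hfmeas : AEStronglyMeasurable f μ₂ :=
      (Finset.aestronglyMeasurable_fun_sum _ fun (n : Fin N) _ =>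
        (((hgm n).abs.const_mul (ε n)).aestronglyMeasurable.smul_const (y n)))
    have hnormsq : Integrable (fun ω₂ => ‖f ω₂‖ ^ 2) μ₂ := by
      apply hdom.mono' (hfmeas.norm.pow 2)
      filter_upwards with ω
      rw [Real.norm_eq_abs, abs_of_nonneg (sq_nonneg _)]
      exact pow_le_pow_left₀ (norm_nonneg _)
        (hbound ε (fun n => le_of_eq (hεabs n)) ω) 2
    have step1 : m * ‖∑ n : Fin N, ε n • y n‖ = ‖∫ ω₂, f ω₂ ∂μ₂‖ := by
      rw [hif, norm_smul, Real.norm_eq_abs,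
        abs_of_nonneg (by rw [hm]; exact integral_nonneg fun x => abs_nonneg x)]
    have step2 : ‖∫ ω₂, f ω₂ ∂μ₂‖ ≤ ∫ ω₂, ‖f ω₂‖ ∂μ₂ := norm_integral_le_integral_norm _
    have step3 : (∫ ω₂, ‖f ω₂‖ ∂μ₂) ^ 2 ≤ ∫ ω₂, ‖f ω₂‖ ^ 2 ∂μ₂ :=
      sq_int μ₂ hfint.norm hnormsq
    have hΦmixf : (fun ω₂ => Φ (mix (ε, T ω₂))) = fun ω₂ => ‖f ω₂‖ ^ 2 := rfl
    rw [hΦmixf]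
    have h4 : (m * ‖∑ n : Fin N, ε n • y n‖) ^ 2 ≤ (∫ ω₂, ‖f ω₂‖ ∂μ₂) ^ 2 := by
      have hnn : 0 ≤ m * ‖∑ n : Fin N, ε n • y n‖ := by
        apply mul_nonneg _ (norm_nonneg _)
        rw [hm]; exact integral_nonneg fun x => abs_nonneg x
      exact pow_le_pow_left₀ hnn ((le_of_eq step1).trans step2) 2
    calc m ^ 2 * Φ ε = (m * ‖∑ n : Fin N, ε n • y n‖) ^ 2 := by rw [hΦ]; ring
      _ ≤ (∫ ω₂, ‖f ω₂‖ ∂μ₂) ^ 2 := h4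
      _ ≤ ∫ ω₂, ‖f ω₂‖ ^ 2 ∂μ₂ := step3
  -- conclusion
  have hBmeas : AEStronglyMeasurable (fun ω₁ => Φ (R ω₁)) μ₁ :=
    (hΦc.measurable.comp hRm).aestronglyMeasurable
  have hBint : Integrable (fun ω₁ => Φ (R ω₁)) μ₁ := by
    apply (integrable_const ((∑ n : Fin N, ‖y n‖) ^ 2)).mono' hBmeas
    filter_upwards [hsign] with ω₁ hω₁
    rw [Real.norm_eq_abs, abs_of_nonneg (hΦnn _)]
    have h1 : ‖∑ n : Fin N, r n ω₁ • y n‖ ≤ ∑ n : Fin N, ‖y n‖ := by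
      refine (norm_sum_le _ _).trans ?_
      apply Finset.sum_le_sum
      intro n _
      rw [norm_smul, Real.norm_eq_abs]
      rcases hω₁ n with h | h <;> simp [h]
    exact pow_le_pow_left₀ (norm_nonneg _) h1 2
  have final : m ^ 2 * ∫ ω₁, Φ (R ω₁) ∂μ₁ ≤ ∫ ω₂, Φ (T ω₂) ∂μ₂ := by
    rw [← integral_const_mul]
    calc ∫ ω₁, m ^ 2 * Φ (R ω₁) ∂μ₁
        ≤ ∫ ω₁, (∫ ω₂, Φ (mix (R ω₁, T ω₂)) ∂μ₂) ∂μ₁ := by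
          apply integral_mono_ae (hBint.const_mul _) hΨint.integral_prod_left
          filter_upwards [hsign] with ω₁ hω₁
          exact hJ (R ω₁) hω₁
      _ = ∫ ω₂, Φ (T ω₂) ∂μ₂ := by rw [← E2, E1]
  exact final

end master

-- helper: the dual-sup identity
section dualsup
variable {E : Type*} [NormedAddCommGroup E] [NormedSpace ℝ E]

instance dual_unit_nonempty : Nonempty {g : StrongDual ℝ E // ‖g‖ ≤ 1} :=
  ⟨⟨0, by simp⟩⟩

lemma dual_bddAbove (N : ℕ) (x : Fin N → E) :
    BddAbove (Set.range fun g : {g : StrongDual ℝ E // ‖g‖ ≤ 1} =>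
      ∑ n : Fin N, (g.1 (x n)) ^ 2) := by
  refine ⟨∑ n : Fin N, ‖x n‖ ^ 2, ?_⟩
  rintro _ ⟨g, rfl⟩
  apply Finset.sum_le_sum
  intro n _
  have h1 : |g.1 (x n)| ≤ ‖x n‖ := by
    calc |g.1 (x n)| = ‖g.1 (x n)‖ := (Real.norm_eq_abs _).symm
      _ ≤ ‖g.1‖ * ‖x n‖ := g.1.le_opNorm (x n)
      _ ≤ 1 * ‖x n‖ := mul_le_mul_of_nonneg_right g.2 (norm_nonneg _)
      _ = ‖x n‖ := one_mul _
  calc (g.1 (x n)) ^ 2 = |g.1 (x n)| ^ 2 := (sq_abs _).symm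
    _ ≤ ‖x n‖ ^ 2 := pow_le_pow_left₀ (abs_nonneg _) h1 2

lemma dual_sup_nonneg (N : ℕ) (x : Fin N → E) :
    0 ≤ ⨆ g : {g : StrongDual ℝ E // ‖g‖ ≤ 1}, ∑ n : Fin N, (g.1 (x n)) ^ 2 := by
  have h := le_ciSup (dual_bddAbove N x) (⟨0, by simp⟩ : {g : StrongDual ℝ E // ‖g‖ ≤ 1})
  simpa using h

lemma dual_sup_sqrt (N : ℕ) (x : Fin N → E) :
    (⨆ g : {g : StrongDual ℝ E // ‖g‖ ≤ 1}, Real.sqrt (∑ n : Fin N, (g.1 (x n)) ^ 2))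
      = Real.sqrt (⨆ g : {g : StrongDual ℝ E // ‖g‖ ≤ 1},
          ∑ n : Fin N, (g.1 (x n)) ^ 2) :=
  (Monotone.map_ciSup_of_continuousAt (Real.continuous_sqrt.continuousAt)
    (fun a b h => Real.sqrt_le_sqrt h) (dual_bddAbove N x)).symm

end dualsup


end GammaSummingAux

/-- If `F` has cotype 2, every `γ`-summing operator `u : E → F` is `2`-summing with
`π₂(u) ≤ C₂(F) · ‖u‖_{R^∞(E;F)}`. -/
theorem gammaSumming_two_summing_of_cotype2
    {Ω₁ Ω₂ : Type*} [MeasurableSpace Ω₁] [MeasurableSpace Ω₂]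
    (μ₁ : Measure Ω₁) [IsProbabilityMeasure μ₁] (μ₂ : Measure Ω₂) [IsProbabilityMeasure μ₂]
    (r : ℕ → Ω₁ → ℝ) (hr : IsRademacherSequence μ₁ r)
    (γ : ℕ → Ω₂ → ℝ) (hγ : IsGaussianSequence μ₂ γ)
    {E F : Type*} [NormedAddCommGroup E] [NormedSpace ℝ E] [CompleteSpace E]
    [NormedAddCommGroup F] [NormedSpace ℝ F] [CompleteSpace F]
    (hcot : (cotype2Set μ₁ r F).Nonempty)
    (u : E →L[ℝ] F) (hu : (gammaSummingSet μ₂ γ u).Nonempty) :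
    IsPSumming 2 u ∧
      piNorm 2 u ≤ sInf (cotype2Set μ₁ r F) * sInf (radSummingSet μ₁ r u) := by
  obtain ⟨Cγ, hCγ0, hCγ⟩ := hu
  set m := ∫ x, |x| ∂Gm with hmdef
  have hm0 : 0 < m := g_m_pos
  -- Step 1: radSummingSet is nonempty
  have hradmem : Cγ / m ∈ radSummingSet μ₁ r u := by
    refine ⟨div_nonneg hCγ0 hm0.le, ?_⟩
    intro N x
    have hkey := master μ₁ μ₂ r γ hr.meas hr.indep hr.dist hγ.meas hγ.indep hγ.gaussian N
      (fun n => u (x n))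
    set B := ∫ ω, ‖∑ n : Fin N, r n ω • u (x n)‖ ^ 2 ∂μ₁ with hB
    set A := ∫ ω, ‖∑ n : Fin N, γ n ω • u (x n)‖ ^ 2 ∂μ₂ with hA
    have hA0 : 0 ≤ A := integral_nonneg fun ω => sq_nonneg _
    have h1 : B ≤ A / m ^ 2 := by
      rw [le_div_iff₀ (by positivity)]
      calc B * m ^ 2 = m ^ 2 * B := mul_comm _ _
        _ ≤ A := hkey
    have h2 : Real.sqrt B ≤ Real.sqrt A / m := by
      calc Real.sqrt B ≤ Real.sqrt (A / m ^ 2) := Real.sqrt_le_sqrt h1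
        _ = Real.sqrt A / Real.sqrt (m ^ 2) := Real.sqrt_div hA0 _
        _ = Real.sqrt A / m := by rw [Real.sqrt_sq hm0.le]
    refine h2.trans ?_
    calc Real.sqrt A / m
        ≤ (Cγ * ⨆ g : {g : StrongDual ℝ E // ‖g‖ ≤ 1},
            Real.sqrt (∑ n : Fin N, (g.1 (x n)) ^ 2)) / m :=
          (div_le_div_iff_of_pos_right hm0).mpr (hCγ N x)
      _ = Cγ / m * ⨆ g : {g : StrongDual ℝ E // ‖g‖ ≤ 1},
            Real.sqrt (∑ n : Fin N, (g.1 (x n)) ^ 2) := by ring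
  have hradne : (radSummingSet μ₁ r u).Nonempty := ⟨Cγ / m, hradmem⟩
  -- Step 2: membership in summingSet
  have hmem : ∀ c ∈ cotype2Set μ₁ r F, ∀ C ∈ radSummingSet μ₁ r u,
      c * C ∈ summingSet 2 u := by
    rintro c ⟨hc0, hc⟩ C ⟨hC0, hC⟩
    refine ⟨mul_nonneg hc0 hC0, ?_⟩
    intro N x
    have h2 : ((2:ℝ)) = ((2:ℕ):ℝ) := by norm_num
    rw [h2]
    simp_rw [Real.rpow_natCast, sq_abs]
    set S1 := ⨆ g : {g : StrongDual ℝ E // ‖g‖ ≤ 1},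
      ∑ n : Fin N, (g.1 (x n)) ^ 2 with hS1
    have hS1nn : 0 ≤ S1 := dual_sup_nonneg N x
    have hsum0 : 0 ≤ ∑ n : Fin N, ‖u (x n)‖ ^ 2 :=
      Finset.sum_nonneg fun n _ => sq_nonneg _
    have hchain : Real.sqrt (∑ n : Fin N, ‖u (x n)‖ ^ 2) ≤ c * C * Real.sqrt S1 := by
      calc Real.sqrt (∑ n : Fin N, ‖u (x n)‖ ^ 2)
          ≤ c * Real.sqrt (∫ ω, ‖∑ n : Fin N, r n ω • u (x n)‖ ^ 2 ∂μ₁) :=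
            hc N (fun n => u (x n))
        _ ≤ c * (C * ⨆ g : {g : StrongDual ℝ E // ‖g‖ ≤ 1},
              Real.sqrt (∑ n : Fin N, (g.1 (x n)) ^ 2)) :=
            mul_le_mul_of_nonneg_left (hC N x) hc0
        _ = c * (C * Real.sqrt S1) := by rw [dual_sup_sqrt]
        _ = c * C * Real.sqrt S1 := by ring
    calc ∑ n : Fin N, ‖u (x n)‖ ^ 2
        = (Real.sqrt (∑ n : Fin N, ‖u (x n)‖ ^ 2)) ^ 2 := (Real.sq_sqrt hsum0).symm
      _ ≤ (c * C * Real.sqrt S1) ^ 2 :=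
          pow_le_pow_left₀ (Real.sqrt_nonneg _) hchain 2
      _ = (c * C) ^ 2 * (Real.sqrt S1) ^ 2 := by ring
      _ = (c * C) ^ 2 * S1 := by rw [Real.sq_sqrt hS1nn]
  -- Step 3: conclusions
  obtain ⟨c₀, hc₀⟩ := hcot
  have hps : IsPSumming 2 u := ⟨c₀ * (Cγ / m), hmem c₀ hc₀ _ hradmem⟩
  refine ⟨hps, ?_⟩
  have hbdd : BddBelow (summingSet 2 u) := ⟨0, fun z hz => hz.1⟩
  have hle : ∀ c ∈ cotype2Set μ₁ r F, ∀ C ∈ radSummingSet μ₁ r u,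
      piNorm 2 u ≤ c * C := fun c hc C hC => csInf_le hbdd (hmem c hc C hC)
  have h1 : ∀ C ∈ radSummingSet μ₁ r u, piNorm 2 u ≤ sInf (cotype2Set μ₁ r F) * C := by
    intro C hC
    rcases eq_or_lt_of_le hC.1 with h0 | h0
    · have := hle c₀ hc₀ C hC
      rw [← h0] at this ⊢
      simpa using this
    · rw [← div_le_iff₀ h0]
      exact le_csInf ⟨c₀, hc₀⟩ fun c hc => (div_le_iff₀ h0).mpr (hle c hc C hC)
  have ha0 : 0 ≤ sInf (cotype2Set μ₁ r F) := Real.sInf_nonneg fun c hc => hc.1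
  rcases eq_or_lt_of_le ha0 with h0 | h0
  · have := h1 _ hradmem
    rw [← h0] at this ⊢
    simpa using this
  · rw [← div_le_iff₀' h0]
    exact le_csInf hradne fun C hC => (div_le_iff₀' h0).mpr (h1 C hC)
end
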